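/- arXiv:1312.7103 — 7 statements merged into one kernel-verified Lean document; each statement's English description precedes it below -/
import Mathlib

section
/- Let f : I ⊆ ℝ \ {0} → ℝ be harmonically convex and a, b ∈ I with a < b, f integrable on [a,b]. Then f(2ab/(a+b)) ≤ (ab/(b-a)) ∫_a^b f(x)/x² dx ≤ (f(a)+f(b))/2. -/
open MeasureTheory Set intervalIntegral

/-- inverse maps Icc to flipped Icc when endpoints have the same sign -/
lemma aux_inv_mem_Icc {p q x : ℝ} (hpq : 0 < p * q) (hx : x ∈ Set.Icc p q) :
    x⁻¹ ∈ Set.Icc q⁻¹ p⁻¹ := by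
  obtain ⟨h1, h2⟩ := hx
  have hp : p ≠ 0 := by rintro rfl; simp at hpq
  have hq : q ≠ 0 := by rintro rfl; simp at hpq
  have hx0 : x ≠ 0 := by rintro rfl; nlinarith
  rcases lt_or_gt_of_ne hp with hpneg | hppos
  · have hqneg : q < 0 := by nlinarith
    have hxneg : x < 0 := lt_of_le_of_lt h2 hqneg
    exact ⟨(inv_le_inv_of_neg hqneg hxneg).mpr h2, (inv_le_inv_of_neg hxneg hpneg).mpr h1⟩
  · have hxpos : 0 < x := lt_of_lt_of_le hppos h1
    have hqpos : 0 < q := lt_of_lt_of_le hxpos h2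
    constructor
    · exact inv_anti₀ hxpos h2
    · exact inv_anti₀ hppos h1

/-- Hermite–Hadamard for a (midpoint-style hypothesis) convex function on `[c,d]`. -/
lemma aux_hermite_hadamard (g : ℝ → ℝ) (c d : ℝ) (hcd : c < d)
    (hconv : ∀ x ∈ Set.Icc c d, ∀ y ∈ Set.Icc c d, ∀ t ∈ Set.Icc (0:ℝ) 1,
      g (t * x + (1 - t) * y) ≤ t * g x + (1 - t) * g y)
    (hg : IntervalIntegrable g volume c d) :
    g ((c + d) / 2) ≤ (d - c)⁻¹ * ∫ x in c..d, g x ∧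
    (d - c)⁻¹ * ∫ x in c..d, g x ≤ (g c + g d) / 2 := by
  have hdc : (0:ℝ) < d - c := sub_pos.2 hcd
  -- integrability of the two parametrizations
  have h1 : IntervalIntegrable (fun t => g (c + (d - c) * t)) volume 0 1 := by
    have := (hg.comp_add_left c).comp_mul_left (c := d - c)
    simpa [sub_self, div_self hdc.ne'] using this
  have h1' : IntervalIntegrable (fun t => g (d + (c - d) * t)) volume 0 1 := by
    have := (hg.symm.comp_add_left d).comp_mul_left (c := c - d)
    have hcd0 : c - d ≠ 0 := by linarith
    simpa [sub_self, div_self hcd0] using this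
  -- the integral identities
  have h2 : ∫ t in (0:ℝ)..1, g (c + (d - c) * t) = (d - c)⁻¹ * ∫ x in c..d, g x := by
    rw [intervalIntegral.integral_comp_add_mul g hdc.ne' c]
    norm_num [smul_eq_mul]
  have h2' : ∫ t in (0:ℝ)..1, g (d + (c - d) * t) = (d - c)⁻¹ * ∫ x in c..d, g x := by
    have hcd0 : c - d ≠ 0 := by linarith
    rw [intervalIntegral.integral_comp_add_mul g hcd0 d]
    rw [intervalIntegral.integral_symm]
    norm_num [smul_eq_mul]
    rw [← neg_sub d c, inv_neg]
    ring
  have hmem : ∀ t ∈ Set.Icc (0:ℝ) 1, c + (d - c) * t ∈ Set.Icc c d := by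
    intro t ht
    constructor <;> nlinarith [ht.1, ht.2]
  have hmem' : ∀ t ∈ Set.Icc (0:ℝ) 1, d + (c - d) * t ∈ Set.Icc c d := by
    intro t ht
    constructor <;> nlinarith [ht.1, ht.2]
  have hce : c ∈ Set.Icc c d := ⟨le_refl _, hcd.le⟩
  have hde : d ∈ Set.Icc c d := ⟨hcd.le, le_refl _⟩
  constructor
  · -- left inequality
    have key : ∀ t ∈ Set.Icc (0:ℝ) 1,
        g ((c + d) / 2) ≤ (g (c + (d - c) * t) + g (d + (c - d) * t)) / 2 := by
      intro t ht
      have := hconv _ (hmem t ht) _ (hmem' t ht) (1/2) (by norm_num)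
      have harg : (1/2 : ℝ) * (c + (d - c) * t) + (1 - 1/2) * (d + (c - d) * t) = (c + d) / 2 := by
        ring
      rw [harg] at this
      linarith
    have hint : ∫ t in (0:ℝ)..1, g ((c + d) / 2) ≤
        ∫ t in (0:ℝ)..1, (g (c + (d - c) * t) + g (d + (c - d) * t)) / 2 := by
      apply intervalIntegral.integral_mono_on (by norm_num) (intervalIntegrable_const)
        ((h1.add h1').div_const 2)
      intro t ht
      exact key t ht
    rw [intervalIntegral.integral_const] at hint
    have : ∫ t in (0:ℝ)..1, (g (c + (d - c) * t) + g (d + (c - d) * t)) / 2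
        = (d - c)⁻¹ * ∫ x in c..d, g x := by
      rw [intervalIntegral.integral_div, intervalIntegral.integral_add h1 h1', h2, h2']
      ring
    rw [this] at hint
    simpa using hint
  · -- right inequality
    have key : ∀ t ∈ Set.Icc (0:ℝ) 1,
        g (c + (d - c) * t) ≤ g c + (g d - g c) * t := by
      intro t ht
      have := hconv _ hde _ hce t ht
      have harg : t * d + (1 - t) * c = c + (d - c) * t := by ring
      rw [harg] at this
      linarith
    have hint : ∫ t in (0:ℝ)..1, g (c + (d - c) * t) ≤
        ∫ t in (0:ℝ)..1, (g c + (g d - g c) * t) := by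
      apply intervalIntegral.integral_mono_on (by norm_num) h1
        ((by fun_prop : Continuous fun t : ℝ => g c + (g d - g c) * t).intervalIntegrable _ _)
      intro t ht
      exact key t ht
    rw [h2] at hint
    have : ∫ t in (0:ℝ)..1, (g c + (g d - g c) * t)
        = (g c + g d) / 2 := by
      rw [intervalIntegral.integral_add intervalIntegrable_const
        ((by fun_prop : Continuous fun t : ℝ => (g d - g c) * t).intervalIntegrable _ _),
        intervalIntegral.integral_const, intervalIntegral.integral_const_mul,
        integral_id]
      norm_num
      ring
    rw [this] at hint
    exact hint

theorem stmt_1 (I : Set ℝ) (hI : I.OrdConnected) (hI0 : ∀ x ∈ I, x ≠ 0)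
    (f : ℝ → ℝ)
    (hf : ∀ x ∈ I, ∀ y ∈ I, ∀ t ∈ Set.Icc (0:ℝ) 1,
      f (x * y / (t * x + (1 - t) * y)) ≤ t * f y + (1 - t) * f x)
    (a b : ℝ) (ha : a ∈ I) (hb : b ∈ I) (hab : a < b)
    (hint : IntervalIntegrable f MeasureTheory.volume a b) :
    f (2 * a * b / (a + b)) ≤ (a * b / (b - a)) * ∫ x in a..b, f x / x ^ 2 ∧
    (a * b / (b - a)) * ∫ x in a..b, f x / x ^ 2 ≤ (f a + f b) / 2 := by
  have hsub : Set.Icc a b ⊆ I := hI.out ha hb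
  have ha0 : a ≠ 0 := hI0 a ha
  have hb0 : b ≠ 0 := hI0 b hb
  -- a and b have the same sign
  have hprod : 0 < a * b := by
    rcases lt_or_gt_of_ne ha0 with haneg | hapos
    · rcases lt_or_gt_of_ne hb0 with hbneg | hbpos
      · exact mul_pos_of_neg_of_neg haneg hbneg
      · exact absurd (hI0 0 (hsub ⟨haneg.le, hbpos.le⟩)) (by simp)
    · exact mul_pos hapos (lt_trans hapos hab)
  have hsum : a + b ≠ 0 := by
    rcases lt_or_gt_of_ne ha0 with haneg | hapos
    · have : b < 0 := by nlinarith
      intro h; linarith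
    · intro h; nlinarith
  set c := b⁻¹ with hc
  set d := a⁻¹ with hd
  have hba : (0:ℝ) < b - a := sub_pos.2 hab
  have hcd : c < d := by
    have h1 : d - c = (b - a) / (a * b) := by
      rw [hc, hd]; field_simp; try ring
    have := div_pos hba hprod
    rw [← h1] at this
    linarith
  set g : ℝ → ℝ := fun u => f u⁻¹ with hg
  have hcdprod : 0 < c * d := by
    rw [hc, hd, ← mul_inv]
    exact inv_pos.2 (by nlinarith [hprod])
  -- membership transfer
  have hmemI : ∀ u ∈ Set.Icc c d, u⁻¹ ∈ Set.Icc a b := by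
    intro u hu
    have := aux_inv_mem_Icc hcdprod ⟨hu.1, hu.2⟩
    simpa [hc, hd, inv_inv] using this
  have hne0 : ∀ u ∈ Set.Icc c d, u ≠ 0 := by
    intro u hu h
    rw [h] at hu
    nlinarith [hu.1, hu.2]
  -- image of Icc c d under inverse is Icc a b
  have himage : (fun u : ℝ => u⁻¹) '' Set.Icc c d = Set.Icc a b := by
    apply Set.Subset.antisymm
    · rintro x ⟨u, hu, rfl⟩
      exact hmemI u hu
    · intro x hx
      refine ⟨x⁻¹, ?_, inv_inv x⟩
      have := aux_inv_mem_Icc hprod hx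
      simpa [hc, hd] using this
  have hderiv : ∀ u ∈ Set.Icc c d, HasDerivWithinAt (fun y : ℝ => y⁻¹) (-(u^2)⁻¹) (Set.Icc c d) u :=
    fun u hu => (hasDerivAt_inv (hne0 u hu)).hasDerivWithinAt
  have hinj : Set.InjOn (fun u : ℝ => u⁻¹) (Set.Icc c d) :=
    fun u _ v _ h => inv_injective h
  -- F := fun x => f x / x^2 is integrable on Icc a b
  have hF : IntegrableOn (fun x => f x / x ^ 2) (Set.Icc a b) volume := by
    have hcont : ContinuousOn (fun x : ℝ => (x ^ 2)⁻¹) (Set.uIcc a b) := by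
      apply ContinuousOn.inv₀ (by fun_prop)
      intro x hx
      rw [Set.uIcc_of_le hab.le] at hx
      exact pow_ne_zero 2 (hI0 x (hsub hx))
    have := hint.mul_continuousOn hcont
    rw [intervalIntegrable_iff_integrableOn_Icc_of_le hab.le] at this
    apply this.congr_fun _ measurableSet_Icc
    intro x _
    simp [div_eq_mul_inv]
  -- pointwise identity of transformed integrand
  have heqOn : Set.EqOn (fun u => |(-(u^2)⁻¹)| • (f u⁻¹ / (u⁻¹) ^ 2)) g (Set.Icc c d) := by
    intro u hu
    have hu0 := hne0 u hu
    have hu2 : (0:ℝ) < u ^ 2 := by positivity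
    have habs : |(-(u ^ 2)⁻¹)| = (u ^ 2)⁻¹ := by
      rw [abs_neg, abs_of_pos (inv_pos.2 hu2)]
    show |(-(u ^ 2)⁻¹)| • (f u⁻¹ / (u⁻¹) ^ 2) = f u⁻¹
    rw [smul_eq_mul, habs, inv_pow, div_inv_eq_mul]
    field_simp
  -- g is interval integrable on c..d
  have hgint : IntervalIntegrable g volume c d := by
    rw [intervalIntegrable_iff_integrableOn_Icc_of_le hcd.le]
    have := (integrableOn_image_iff_integrableOn_abs_deriv_smul measurableSet_Icc hderiv hinj
      (fun x => f x / x ^ 2)).mp (by rw [himage]; exact hF)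
    exact this.congr_fun heqOn measurableSet_Icc
  -- change of variables for the integral
  have hchg : ∫ x in a..b, f x / x ^ 2 = ∫ u in c..d, g u := by
    rw [intervalIntegral.integral_of_le hab.le, intervalIntegral.integral_of_le hcd.le,
      ← MeasureTheory.integral_Icc_eq_integral_Ioc, ← MeasureTheory.integral_Icc_eq_integral_Ioc,
      ← himage,
      integral_image_eq_integral_abs_deriv_smul measurableSet_Icc hderiv hinj]
    exact setIntegral_congr_fun measurableSet_Icc heqOn
  -- convexity of g
  have hconv : ∀ x ∈ Set.Icc c d, ∀ y ∈ Set.Icc c d, ∀ t ∈ Set.Icc (0:ℝ) 1,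
      g (t * x + (1 - t) * y) ≤ t * g x + (1 - t) * g y := by
    intro x hx y hy t ht
    have hxI : x⁻¹ ∈ I := hsub (hmemI x hx)
    have hyI : y⁻¹ ∈ I := hsub (hmemI y hy)
    have hcomb : t * x + (1 - t) * y ∈ Set.Icc c d := by
      constructor <;> nlinarith [hx.1, hx.2, hy.1, hy.2, ht.1, ht.2]
    have hcomb0 : t * x + (1 - t) * y ≠ 0 := hne0 _ hcomb
    have := hf y⁻¹ hyI x⁻¹ hxI t ht
    have harg : y⁻¹ * x⁻¹ / (t * y⁻¹ + (1 - t) * x⁻¹) = (t * x + (1 - t) * y)⁻¹ := by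
      have hx0 := hne0 x hx
      have hy0 := hne0 y hy
      have h1 : t * y⁻¹ + (1 - t) * x⁻¹ = (t * x + (1 - t) * y) / (x * y) := by
        field_simp
        try exact Or.inl trivial
      rw [h1, div_div_eq_mul_div, show y⁻¹ * x⁻¹ * (x * y) = 1 by field_simp, one_div]
    rw [harg] at this
    exact this
  obtain ⟨hl, hr⟩ := aux_hermite_hadamard g c d hcd hconv hgint
  have hcoef : (d - c)⁻¹ = a * b / (b - a) := by
    have h1 : d - c = (b - a) / (a * b) := by
      rw [hc, hd]; field_simp; try ring
    rw [h1, inv_div]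
  have hmid : (c + d) / 2 = ((2 * a * b / (a + b)))⁻¹ := by
    have h2ab : 2 * a * b ≠ 0 := by positivity
    rw [hc, hd, inv_div]
    field_simp
    try ring
    try exact Or.inl trivial
  constructor
  · have : g ((c + d) / 2) = f (2 * a * b / (a + b)) := by
      rw [hmid]; simp [hg]
    rw [← this, hchg, ← hcoef]
    exact hl
  · have : (g c + g d) / 2 = (f a + f b) / 2 := by
      simp [hg, hc, hd]
      ring
    rw [← this, hchg, ← hcoef]
    exact hr
end

section
/- Let f : I ⊆ (0,∞) → ℝ be a harmonically convex function, a, b ∈ I with a < b, f ∈ L¹[a,b], and α > 0. Then f(2ab/(a+b)) ≤ (Γ(α+1)/2)(ab/(b−a))^α [J^α_{(1/a)−}(f∘g)(1/b) + J^α_{(1/b)+}(f∘g)(1/a)] ≤ (f(a)+f(b))/2, where g(x) = 1/x. -/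
open MeasureTheory Set intervalIntegral

lemma hh_aux (h : ℝ → ℝ) (A B : ℝ) (hAB : A < B)
    (hconv : ∀ u ∈ Icc A B, ∀ v ∈ Icc A B, ∀ t ∈ Icc (0:ℝ) 1,
      h (t * u + (1 - t) * v) ≤ t * h u + (1 - t) * h v)
    (hmeas : AEStronglyMeasurable h (volume.restrict (Ioc A B)))
    (α : ℝ) (hα : 0 < α) :
    2 * h ((A + B) / 2) * ((B - A) ^ α / α) ≤
        (∫ t in A..B, (t - A) ^ (α - 1) * h t) + (∫ t in A..B, (B - t) ^ (α - 1) * h t) ∧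
      (∫ t in A..B, (t - A) ^ (α - 1) * h t) + (∫ t in A..B, (B - t) ^ (α - 1) * h t) ≤
        (h A + h B) * ((B - A) ^ α / α) := by
  have hABle : A ≤ B := hAB.le
  have hBA : 0 < B - A := by linarith
  have hα1 : (-1:ℝ) < α - 1 := by linarith
  set m : ℝ := (A + B) / 2 with hm
  have hub : ∀ t ∈ Icc A B, h t ≤ max (h A) (h B) := by
    intro t ht
    have hs : (B - t) / (B - A) ∈ Icc (0:ℝ) 1 := by
      constructor
      · apply div_nonneg _ hBA.le; linarith [ht.2]
      · rw [div_le_one hBA]; linarith [ht.1]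
    set s : ℝ := (B - t) / (B - A) with hsdef
    have hts : s * A + (1 - s) * B = t := by
      rw [hsdef]
      field_simp
      ring
    have h1 := hconv A (left_mem_Icc.2 hABle) B (right_mem_Icc.2 hABle) s hs
    rw [hts] at h1
    have hA' : h A ≤ max (h A) (h B) := le_max_left _ _
    have hB' : h B ≤ max (h A) (h B) := le_max_right _ _
    nlinarith [hs.1, hs.2]
  -- pointwise bounds from convexity
  have hkey : ∀ t ∈ Icc A B,
      2 * h m ≤ h t + h (A + B - t) ∧ h t + h (A + B - t) ≤ h A + h B := by
    intro t ht
    have ht' : A + B - t ∈ Icc A B := by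
      constructor
      · linarith [ht.2]
      · linarith [ht.1]
    have hs : (B - t) / (B - A) ∈ Icc (0:ℝ) 1 := by
      constructor
      · apply div_nonneg _ hBA.le; linarith [ht.2]
      · rw [div_le_one hBA]; linarith [ht.1]
    set s : ℝ := (B - t) / (B - A) with hsdef
    have hts : s * A + (1 - s) * B = t := by
      rw [hsdef]
      field_simp
      ring
    have hts' : (1 - s) * A + s * B = A + B - t := by
      rw [← hts]; ring
    constructor
    · have hmemhalf : (1/2 : ℝ) ∈ Icc (0:ℝ) 1 := by norm_num
      have h0 := hconv t ht (A + B - t) ht' (1/2) hmemhalf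
      have hmid : (1/2 : ℝ) * t + (1 - 1/2) * (A + B - t) = m := by rw [hm]; ring
      rw [hmid] at h0
      have e : (1 - 1/2 : ℝ) = 1/2 := by norm_num
      rw [e] at h0
      linarith
    · have hs' : 1 - s ∈ Icc (0:ℝ) 1 := by
        constructor
        · linarith [hs.2]
        · linarith [hs.1]
      have h1 := hconv A (left_mem_Icc.2 hABle) B (right_mem_Icc.2 hABle) s hs
      have h2 := hconv A (left_mem_Icc.2 hABle) B (right_mem_Icc.2 hABle) (1 - s) hs'
      rw [hts] at h1
      rw [sub_sub_cancel, hts'] at h2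
      linarith
  -- boundedness of h on [A, B]
  obtain ⟨M, hM⟩ : ∃ M : ℝ, ∀ t ∈ Icc A B, |h t| ≤ M := by
    refine ⟨|max (h A) (h B)| + |2 * h m - max (h A) (h B)|, fun t ht => ?_⟩
    have hC : h t ≤ max (h A) (h B) := hub t ht
    have hD : 2 * h m - max (h A) (h B) ≤ h t := by
      have hk := (hkey t ht).1
      have h2 : A + B - t ∈ Icc A B := ⟨by linarith [ht.2], by linarith [ht.1]⟩
      have := hub _ h2
      linarith
    rw [abs_le]
    constructor
    · have := neg_abs_le (2 * h m - max (h A) (h B))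
      have := le_abs_self (max (h A) (h B))
      nlinarith [abs_nonneg (max (h A) (h B)), abs_nonneg (2 * h m - max (h A) (h B)),
        le_abs_self (2 * h m - max (h A) (h B)), neg_abs_le (2 * h m - max (h A) (h B))]
    · nlinarith [abs_nonneg (2 * h m - max (h A) (h B)), le_abs_self (max (h A) (h B))]
  -- weight integrability
  have hw1 : IntervalIntegrable (fun t => (B - t) ^ (α - 1)) volume A B := by
    have := (intervalIntegrable_rpow' (a := B - A) (b := 0) hα1).comp_sub_left B
    simpa using this
  have hw2 : IntervalIntegrable (fun t => (t - A) ^ (α - 1)) volume A B := by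
    have := (intervalIntegrable_rpow' (a := 0) (b := B - A) hα1).comp_sub_right A
    simpa using this
  -- weight integral values
  have hK1 : (∫ t in A..B, (B - t) ^ (α - 1)) = (B - A) ^ α / α := by
    rw [intervalIntegral.integral_comp_sub_left (fun x : ℝ => x ^ (α - 1)) B]
    rw [integral_rpow (Or.inl hα1)]
    rw [sub_self, sub_add_cancel, Real.zero_rpow hα.ne', sub_zero]
  have hK2 : (∫ t in A..B, (t - A) ^ (α - 1)) = (B - A) ^ α / α := by
    rw [intervalIntegral.integral_comp_sub_right (fun x : ℝ => x ^ (α - 1)) A]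
    rw [integral_rpow (Or.inl hα1)]
    rw [sub_self, sub_add_cancel, Real.zero_rpow hα.ne', sub_zero]
  -- integrand integrability
  have hmeasIcc : AEStronglyMeasurable h (volume.restrict (Ioc A B)) := hmeas
  have hF1 : IntervalIntegrable (fun t => (B - t) ^ (α - 1) * h t) volume A B := by
    rw [intervalIntegrable_iff, uIoc_of_le hABle]
    apply Integrable.mono' ((hw1.1).const_mul M)
    · exact (hw1.1.aestronglyMeasurable).mul hmeasIcc
    · rw [ae_restrict_iff' measurableSet_Ioc]
      filter_upwards with t ht
      have h1 : (0:ℝ) ≤ (B - t) ^ (α - 1) := Real.rpow_nonneg (by linarith [ht.2]) _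
      have h2 : |h t| ≤ M := hM t (Ioc_subset_Icc_self ht)
      rw [Real.norm_eq_abs, abs_mul, abs_of_nonneg h1, mul_comm M]
      exact mul_le_mul_of_nonneg_left h2 h1
  have hF2 : IntervalIntegrable (fun t => (t - A) ^ (α - 1) * h t) volume A B := by
    rw [intervalIntegrable_iff, uIoc_of_le hABle]
    apply Integrable.mono' ((hw2.1).const_mul M)
    · exact (hw2.1.aestronglyMeasurable).mul hmeasIcc
    · rw [ae_restrict_iff' measurableSet_Ioc]
      filter_upwards with t ht
      have h1 : (0:ℝ) ≤ (t - A) ^ (α - 1) := Real.rpow_nonneg (by linarith [ht.1]) _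
      have h2 : |h t| ≤ M := hM t (Ioc_subset_Icc_self ht)
      rw [Real.norm_eq_abs, abs_mul, abs_of_nonneg h1, mul_comm M]
      exact mul_le_mul_of_nonneg_left h2 h1
  -- reflected integrand
  have hF2r : IntervalIntegrable (fun t => (B - t) ^ (α - 1) * h (A + B - t)) volume A B := by
    have h0 := (hF2.comp_sub_left (A + B)).symm
    have e : (fun x => (A + B - x - A) ^ (α - 1) * h (A + B - x)) =
        fun x => (B - x) ^ (α - 1) * h (A + B - x) := by
      funext x; congr 2; ring
    rw [e] at h0
    simpa using h0
  have hrefl : (∫ t in A..B, (t - A) ^ (α - 1) * h t) =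
      ∫ t in A..B, (B - t) ^ (α - 1) * h (A + B - t) := by
    have key := intervalIntegral.integral_comp_sub_left
      (a := A) (b := B) (fun t => (t - A) ^ (α - 1) * h t) (A + B)
    simp only [add_sub_cancel_right, add_sub_cancel_left] at key
    rw [← key]
    apply intervalIntegral.integral_congr
    intro x _
    simp only
    congr 2
    ring
  -- combined integral
  have hGint : IntervalIntegrable
      (fun t => (B - t) ^ (α - 1) * (h t + h (A + B - t))) volume A B := by
    have := hF1.add hF2r
    have e : (fun t => (B - t) ^ (α - 1) * (h t + h (A + B - t))) =
        fun t => (B - t) ^ (α - 1) * h t + (B - t) ^ (α - 1) * h (A + B - t) := by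
      funext t; ring
    rw [e]
    exact this
  have hGeq : (∫ t in A..B, (t - A) ^ (α - 1) * h t) + (∫ t in A..B, (B - t) ^ (α - 1) * h t)
      = ∫ t in A..B, (B - t) ^ (α - 1) * (h t + h (A + B - t)) := by
    rw [hrefl]
    rw [← intervalIntegral.integral_add hF2r hF1]
    apply intervalIntegral.integral_congr
    intro x _
    simp only
    ring
  rw [hGeq]
  constructor
  · have hlow : (∫ t in A..B, (B - t) ^ (α - 1) * (2 * h m)) ≤
        ∫ t in A..B, (B - t) ^ (α - 1) * (h t + h (A + B - t)) := by
      apply intervalIntegral.integral_mono_on hABle (hw1.mul_const _) hGint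
      intro t ht
      have h1 : (0:ℝ) ≤ (B - t) ^ (α - 1) := Real.rpow_nonneg (by linarith [ht.2]) _
      exact mul_le_mul_of_nonneg_left (hkey t ht).1 h1
    have : (∫ t in A..B, (B - t) ^ (α - 1) * (2 * h m)) = 2 * h m * ((B - A) ^ α / α) := by
      rw [intervalIntegral.integral_mul_const, hK1]; ring
    rw [this] at hlow
    calc 2 * h ((A + B) / 2) * ((B - A) ^ α / α) = 2 * h m * ((B - A) ^ α / α) := by rw [hm]
    _ ≤ _ := hlow
  · have hup : (∫ t in A..B, (B - t) ^ (α - 1) * (h t + h (A + B - t))) ≤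
        ∫ t in A..B, (B - t) ^ (α - 1) * (h A + h B) := by
      apply intervalIntegral.integral_mono_on hABle hGint (hw1.mul_const _)
      intro t ht
      have h1 : (0:ℝ) ≤ (B - t) ^ (α - 1) := Real.rpow_nonneg (by linarith [ht.2]) _
      exact mul_le_mul_of_nonneg_left (hkey t ht).2 h1
    have : (∫ t in A..B, (B - t) ^ (α - 1) * (h A + h B)) = (h A + h B) * ((B - A) ^ α / α) := by
      rw [intervalIntegral.integral_mul_const, hK1]; ring
    rw [this] at hup
    exact hup

noncomputable def Jplus (α a : ℝ) (h : ℝ → ℝ) (x : ℝ) : ℝ :=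
  (1 / Real.Gamma α) * ∫ t in a..x, (x - t) ^ (α - 1) * h t

noncomputable def Jminus (α b : ℝ) (h : ℝ → ℝ) (x : ℝ) : ℝ :=
  (1 / Real.Gamma α) * ∫ t in x..b, (t - x) ^ (α - 1) * h t

theorem stmt_4 (f : ℝ → ℝ) (a b : ℝ) (ha : 0 < a) (hab : a < b)
    (hf : ∀ x ∈ Set.Icc a b, ∀ y ∈ Set.Icc a b, ∀ t ∈ Set.Icc (0:ℝ) 1,
      f (x * y / (t * x + (1 - t) * y)) ≤ t * f y + (1 - t) * f x)
    (hint : IntervalIntegrable f MeasureTheory.volume a b)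
    (α : ℝ) (hα : 0 < α) (g : ℝ → ℝ) (hg : g = fun x => 1 / x) :
    f (2 * a * b / (a + b)) ≤
      (Real.Gamma (α + 1) / 2) * (a * b / (b - a)) ^ α *
        (Jminus α (1 / a) (f ∘ g) (1 / b) + Jplus α (1 / b) (f ∘ g) (1 / a)) ∧
    (Real.Gamma (α + 1) / 2) * (a * b / (b - a)) ^ α *
        (Jminus α (1 / a) (f ∘ g) (1 / b) + Jplus α (1 / b) (f ∘ g) (1 / a)) ≤
      (f a + f b) / 2 := by
  subst hg
  have hb : 0 < b := ha.trans hab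
  have hA : 0 < 1/b := by positivity
  have hAB : 1/b < 1/a := one_div_lt_one_div_of_lt ha hab
  -- measurability of f ∘ g on the transformed interval
  have hmeas : AEStronglyMeasurable (f ∘ (fun x => 1 / x))
      (volume.restrict (Ioc (1/b) (1/a))) := by
    have himg : (fun t : ℝ => t⁻¹) '' Icc (1/b) (1/a) = Icc a b := by
      ext y
      simp only [mem_image, mem_Icc]
      constructor
      · rintro ⟨x, ⟨hx1, hx2⟩, rfl⟩
        have hx0 : 0 < x := lt_of_lt_of_le hA hx1
        constructor
        · nlinarith [mul_inv_cancel₀ hx0.ne', mul_one_div_cancel ha.ne']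
        · nlinarith [mul_inv_cancel₀ hx0.ne', mul_one_div_cancel hb.ne']
      · rintro ⟨hy1, hy2⟩
        have hy0 : 0 < y := lt_of_lt_of_le ha hy1
        refine ⟨y⁻¹, ⟨?_, ?_⟩, inv_inv y⟩
        · nlinarith [mul_inv_cancel₀ hy0.ne', mul_one_div_cancel hb.ne']
        · nlinarith [mul_inv_cancel₀ hy0.ne', mul_one_div_cancel ha.ne']
    have hderiv : ∀ x ∈ Icc (1/b) (1/a),
        HasDerivWithinAt (fun t : ℝ => t⁻¹) (-(x^2)⁻¹) (Icc (1/b) (1/a)) x := by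
      intro x hx
      exact (hasDerivAt_inv (lt_of_lt_of_le hA hx.1).ne').hasDerivWithinAt
    have hinj : InjOn (fun t : ℝ => t⁻¹) (Icc (1/b) (1/a)) := inv_injective.injOn
    have hInt : IntegrableOn f (Icc a b) := by
      rw [integrableOn_Icc_iff_integrableOn_Ioc]
      exact hint.1
    rw [← himg] at hInt
    rw [integrableOn_image_iff_integrableOn_abs_deriv_smul measurableSet_Icc hderiv hinj f]
      at hInt
    have h1 : AEStronglyMeasurable (fun x : ℝ => |(-(x^2)⁻¹)| • f x⁻¹)
        (volume.restrict (Icc (1/b) (1/a))) := hInt.aestronglyMeasurable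
    have h2 : AEStronglyMeasurable (fun x : ℝ => x^2 * (|(-(x^2)⁻¹)| • f x⁻¹))
        (volume.restrict (Icc (1/b) (1/a))) :=
      ((measurable_id.pow_const 2).aestronglyMeasurable).mul h1
    have h3 : AEStronglyMeasurable (f ∘ (fun x => 1 / x))
        (volume.restrict (Icc (1/b) (1/a))) := by
      refine h2.congr ?_
      rw [Filter.EventuallyEq, ae_restrict_iff' measurableSet_Icc]
      filter_upwards with x hx
      have hx0 : 0 < x := lt_of_lt_of_le hA hx.1
      have hx2 : (0:ℝ) < x^2 := by positivity
      simp only [Function.comp_apply, smul_eq_mul, abs_neg, abs_inv, abs_of_pos hx2, one_div]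
      rw [← mul_assoc, mul_inv_cancel₀ hx2.ne', one_mul]
    exact h3.mono_measure (Measure.restrict_mono Ioc_subset_Icc_self le_rfl)
  -- convexity of f ∘ g on the transformed interval
  have hconv : ∀ u ∈ Icc (1/b) (1/a), ∀ v ∈ Icc (1/b) (1/a), ∀ t ∈ Icc (0:ℝ) 1,
      (f ∘ (fun x => 1 / x)) (t * u + (1 - t) * v) ≤
        t * (f ∘ (fun x => 1 / x)) u + (1 - t) * (f ∘ (fun x => 1 / x)) v := by
    intro u hu v hv t ht
    have hu0 : 0 < u := lt_of_lt_of_le hA hu.1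
    have hv0 : 0 < v := lt_of_lt_of_le hA hv.1
    have hx : 1/v ∈ Icc a b := by
      constructor
      · rw [le_div_iff₀ hv0]; nlinarith [hv.2, mul_one_div_cancel ha.ne']
      · rw [div_le_iff₀ hv0]; nlinarith [hv.1, mul_one_div_cancel hb.ne']
    have hy : 1/u ∈ Icc a b := by
      constructor
      · rw [le_div_iff₀ hu0]; nlinarith [hu.2, mul_one_div_cancel ha.ne']
      · rw [div_le_iff₀ hu0]; nlinarith [hu.1, mul_one_div_cancel hb.ne']
    have hd : 0 < t * u + (1 - t) * v := by
      nlinarith [mul_le_mul_of_nonneg_left hu.1 ht.1,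
        mul_le_mul_of_nonneg_left hv.1 (by linarith [ht.2] : (0:ℝ) ≤ 1 - t), hA]
    have hd2 : 0 < t * (1/v) + (1 - t) * (1/u) := by
      have h1v : 0 < 1/v := by positivity
      have h1u : 0 < 1/u := by positivity
      nlinarith [mul_nonneg ht.1 h1v.le,
        mul_nonneg (by linarith [ht.2] : (0:ℝ) ≤ 1 - t) h1u.le,
        mul_le_mul_of_nonneg_left (le_of_lt h1v) ht.1]
    have key := hf (1/v) hx (1/u) hy t ht
    have harg : 1/v * (1/u) / (t * (1/v) + (1 - t) * (1/u)) = 1/(t*u+(1-t)*v) := by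
      rw [div_eq_div_iff hd2.ne' hd.ne']
      field_simp
    rw [harg] at key
    simpa [Function.comp] using key
  -- apply the abstract Hermite–Hadamard lemma
  have HH := hh_aux (f ∘ (fun x => 1 / x)) (1/b) (1/a) hAB hconv hmeas α hα
  simp only [Jminus, Jplus]
  set F : ℝ → ℝ := f ∘ (fun x => 1 / x) with hF
  set I₂ : ℝ := ∫ t in (1/b)..(1/a), (t - 1/b) ^ (α - 1) * F t with hI2
  set I₁ : ℝ := ∫ t in (1/b)..(1/a), (1/a - t) ^ (α - 1) * F t with hI1
  have hΓ : 0 < Real.Gamma α := Real.Gamma_pos_of_pos hα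
  have hba : 0 < b - a := by linarith
  have hBA : 0 < 1/a - 1/b := by linarith
  set c : ℝ := (a * b / (b - a)) ^ α with hcdef
  have hc : 0 < c := Real.rpow_pos_of_pos (by positivity) α
  have hone : c * (1/a - 1/b) ^ α = 1 := by
    rw [hcdef, ← Real.mul_rpow (by positivity) hBA.le]
    rw [show a * b / (b - a) * (1/a - 1/b) = 1 by field_simp]
    exact Real.one_rpow α
  have hMeq : (Real.Gamma (α + 1) / 2) * c *
      (1 / Real.Gamma α * I₂ + 1 / Real.Gamma α * I₁) = α * c / 2 * (I₂ + I₁) := by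
    rw [Real.Gamma_add_one hα.ne']
    field_simp
  rw [hMeq]
  have hmarg : F ((1/b + 1/a) / 2) = f (2 * a * b / (a + b)) := by
    rw [hF]
    simp only [Function.comp_apply]
    congr 1
    rw [div_eq_div_iff (by positivity) (by positivity)]
    field_simp
  have hendA : F (1/b) = f b := by
    rw [hF]; simp only [Function.comp_apply, one_div_one_div]
  have hendB : F (1/a) = f a := by
    rw [hF]; simp only [Function.comp_apply, one_div_one_div]
  constructor
  · have h1 := mul_le_mul_of_nonneg_left HH.1 (by positivity : (0:ℝ) ≤ α * c / 2)
    have hLHS : α * c / 2 * (2 * F ((1/b + 1/a) / 2) * ((1/a - 1/b) ^ α / α)) =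
        F ((1/b + 1/a) / 2) * (c * (1/a - 1/b) ^ α) := by
      field_simp
    rw [hLHS, hone, mul_one, hmarg] at h1
    exact h1
  · have h2 := mul_le_mul_of_nonneg_left HH.2 (by positivity : (0:ℝ) ≤ α * c / 2)
    have hRHS : α * c / 2 * ((F (1/b) + F (1/a)) * ((1/a - 1/b) ^ α / α)) =
        (F (1/b) + F (1/a)) / 2 * (c * (1/a - 1/b) ^ α) := by
      field_simp
    rw [hRHS, hone, mul_one, hendA, hendB] at h2
    calc α * c / 2 * (I₂ + I₁) ≤ (f b + f a) / 2 := h2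
    _ = (f a + f b) / 2 := by ring
end

section
/- Let f : I ⊆ (0,∞) → ℝ be harmonically convex on [a,b] with a < b and f ∈ L¹[a,b], and α > 0. Then the first fractional Hermite–Hadamard inequality holds: f(2ab/(a+b)) ≤ (α/2) [∫_0^1 t^{α−1} f(ab/(tb+(1−t)a)) dt + ∫_0^1 t^{α−1} f(ab/(ta+(1−t)b)) dt]. -/
open MeasureTheory Set

/-- Integrability of `t ↦ t^(α-1) * f (a*b/(p+t*q))` on `[0,1]` when `f` is integrable on
`[a,b]`, the denominator stays in `[a,b]`, and the composed values are bounded. -/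
lemma key_integrable (f : ℝ → ℝ) (a b : ℝ) (ha : 0 < a) (hab : a < b)
    (hint : IntegrableOn f (Set.Icc a b))
    (p q : ℝ) (hq : q ≠ 0) (hden : ∀ t ∈ Set.Icc (0:ℝ) 1, p + t * q ∈ Set.Icc a b)
    (c C : ℝ) (hbd : ∀ t ∈ Set.Icc (0:ℝ) 1, f (a * b / (p + t * q)) ∈ Set.Icc c C)
    (α : ℝ) (hα : 0 < α) :
    IntervalIntegrable (fun t => t ^ (α - 1) * f (a * b / (p + t * q)))
      MeasureTheory.volume 0 1 := by
  have hb : 0 < b := ha.trans hab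
  have hab0 : (0:ℝ) < a * b := mul_pos ha hb
  set φ : ℝ → ℝ := fun t => a * b / (p + t * q) with hφ
  set φ' : ℝ → ℝ := fun t => a * b * (-q / (p + t * q) ^ 2) with hφ'
  have hdpos : ∀ t ∈ Set.Icc (0:ℝ) 1, 0 < p + t * q := fun t ht => lt_of_lt_of_le ha (hden t ht).1
  -- derivative
  have hderiv : ∀ t ∈ Set.Ioo (0:ℝ) 1, HasDerivWithinAt φ (φ' t) (Set.Ioo (0:ℝ) 1) t := by
    intro t ht
    have hne : p + t * q ≠ 0 := (hdpos t (Set.Ioo_subset_Icc_self ht)).ne'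
    have h1 : HasDerivAt (fun t : ℝ => p + t * q) q t := by
      simpa using ((hasDerivAt_id t).mul_const q).const_add p
    have h2 : HasDerivAt (fun t : ℝ => (p + t * q)⁻¹) (-q / (p + t * q) ^ 2) t := by
      exact h1.inv hne
    have h3 : HasDerivAt φ (φ' t) t := by
      simpa [hφ, hφ', div_eq_mul_inv, mul_comm, mul_assoc, mul_left_comm] using
        h2.const_mul (a * b)
    exact h3.hasDerivWithinAt
  -- injectivity
  have hinj : Set.InjOn φ (Set.Ioo (0:ℝ) 1) := by
    intro x hx y hy hxy
    have hdx := hdpos x (Set.Ioo_subset_Icc_self hx)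
    have hdy := hdpos y (Set.Ioo_subset_Icc_self hy)
    simp only [hφ] at hxy
    rw [div_eq_div_iff hdx.ne' hdy.ne'] at hxy
    have h1 : p + x * q = p + y * q := mul_left_cancel₀ hab0.ne' (by linarith [hxy])
    have h2 : x * q = y * q := by linarith
    exact mul_right_cancel₀ hq h2
  -- image inside [a,b]
  have hmem : ∀ t ∈ Set.Icc (0:ℝ) 1, φ t ∈ Set.Icc a b := by
    intro t ht
    have hd := hden t ht
    have hdp := hdpos t ht
    constructor
    · rw [le_div_iff₀ hdp]; nlinarith [hd.2]
    · rw [div_le_iff₀ hdp]; nlinarith [hd.1]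
  have himg : φ '' Set.Ioo (0:ℝ) 1 ⊆ Set.Icc a b := by
    rintro _ ⟨t, ht, rfl⟩; exact hmem t (Set.Ioo_subset_Icc_self ht)
  have h1 : IntegrableOn (fun t => |φ' t| • f (φ t)) (Set.Ioo (0:ℝ) 1) := by
    exact (integrableOn_image_iff_integrableOn_abs_deriv_smul measurableSet_Ioo hderiv hinj
      f).mp (hint.mono_set himg)
  -- a.e. strong measurability of f ∘ φ on Ioo, hence on Ioc
  have hφ'ne : ∀ t ∈ Set.Icc (0:ℝ) 1, φ' t ≠ 0 := by
    intro t ht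
    have := hdpos t ht
    simp only [hφ']
    intro h
    rcases mul_eq_zero.mp h with h | h
    · exact hab0.ne' h
    · rcases div_eq_zero_iff.mp h with h | h
      · exact hq (by linarith [neg_eq_zero.mp h])
      · exact (pow_ne_zero 2 this.ne') h
  have hmeasφ' : Measurable fun t => |φ' t| := by
    apply Measurable.abs
    apply Measurable.mul measurable_const
    apply Measurable.div measurable_const
    exact ((measurable_id.mul_const q).const_add p).pow measurable_const
  have haesm : AEStronglyMeasurable (fun t => f (φ t))
      (MeasureTheory.volume.restrict (Set.Ioo (0:ℝ) 1)) := by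
    have h2 : AEStronglyMeasurable (fun t => (|φ' t|)⁻¹ * (|φ' t| • f (φ t)))
        (MeasureTheory.volume.restrict (Set.Ioo (0:ℝ) 1)) :=
      (hmeasφ'.inv.aestronglyMeasurable).mul h1.aestronglyMeasurable
    apply h2.congr
    filter_upwards [MeasureTheory.ae_restrict_mem measurableSet_Ioo] with t ht
    have hne : |φ' t| ≠ 0 := abs_ne_zero.mpr (hφ'ne t (Set.Ioo_subset_Icc_self ht))
    simp [smul_eq_mul, ← mul_assoc, inv_mul_cancel₀ hne]
  have hrestr : MeasureTheory.volume.restrict (Set.Ioo (0:ℝ) 1)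
      = MeasureTheory.volume.restrict (Set.Ioc (0:ℝ) 1) :=
    MeasureTheory.Measure.restrict_congr_set MeasureTheory.Ioo_ae_eq_Ioc
  have haesm' : AEStronglyMeasurable (fun t => f (φ t))
      (MeasureTheory.volume.restrict (Set.Ioc (0:ℝ) 1)) := hrestr ▸ haesm
  -- domination
  set M : ℝ := max |c| |C| with hM
  have habs : ∀ t ∈ Set.Icc (0:ℝ) 1, |f (φ t)| ≤ M := by
    intro t ht
    have h := hbd t ht
    rw [abs_le]
    constructor
    · have : -M ≤ -|c| := neg_le_neg (le_max_left _ _)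
      calc -M ≤ -|c| := this
        _ ≤ c := neg_abs_le c
        _ ≤ f (φ t) := h.1
    · calc f (φ t) ≤ C := h.2
        _ ≤ |C| := le_abs_self C
        _ ≤ M := le_max_right _ _
  have hgint : IntegrableOn (fun t => M * t ^ (α - 1)) (Set.Ioc (0:ℝ) 1) := by
    have := (intervalIntegral.intervalIntegrable_rpow' (a := 0) (b := 1) (r := α - 1)
      (by linarith)).const_mul M
    rwa [intervalIntegrable_iff_integrableOn_Ioc_of_le zero_le_one] at this
  have hfinal : IntegrableOn (fun t => t ^ (α - 1) * f (φ t)) (Set.Ioc (0:ℝ) 1) := by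
    apply MeasureTheory.Integrable.mono' hgint
    · exact ((continuousOn_id.rpow_const (fun x hx => Or.inl (ne_of_gt hx.1))).aestronglyMeasurable
        measurableSet_Ioc).mul haesm'
    · filter_upwards [MeasureTheory.ae_restrict_mem measurableSet_Ioc] with t ht
      have ht' : t ∈ Set.Icc (0:ℝ) 1 := Set.Ioc_subset_Icc_self ht
      have htpos : 0 < t := ht.1
      have hrp : (0:ℝ) ≤ t ^ (α - 1) := Real.rpow_nonneg htpos.le _
      rw [Real.norm_eq_abs, abs_mul, abs_of_nonneg hrp, mul_comm M]
      exact mul_le_mul_of_nonneg_left (habs t ht') hrp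
  rwa [intervalIntegrable_iff_integrableOn_Ioc_of_le zero_le_one]

theorem stmt_5 (f : ℝ → ℝ) (a b : ℝ) (ha : 0 < a) (hab : a < b)
    (hf : ∀ x ∈ Set.Icc a b, ∀ y ∈ Set.Icc a b, ∀ t ∈ Set.Icc (0:ℝ) 1,
      f (x * y / (t * x + (1 - t) * y)) ≤ t * f y + (1 - t) * f x)
    (hint : IntervalIntegrable f MeasureTheory.volume a b)
    (α : ℝ) (hα : 0 < α) :
    f (2 * a * b / (a + b)) ≤
      (α / 2) * ((∫ t in (0:ℝ)..1, t ^ (α - 1) * f (a * b / (t * b + (1 - t) * a))) +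
        ∫ t in (0:ℝ)..1, t ^ (α - 1) * f (a * b / (t * a + (1 - t) * b))) := by
  have hb : 0 < b := ha.trans hab
  have hintOn : IntegrableOn f (Set.Icc a b) := by
    rw [intervalIntegrable_iff_integrableOn_Icc_of_le hab.le] at hint
    exact hint
  set m : ℝ := f (2 * a * b / (a + b)) with hm
  set C : ℝ := max (f a) (f b) with hC
  have haI : a ∈ Set.Icc a b := ⟨le_refl a, hab.le⟩
  have hbI : b ∈ Set.Icc a b := ⟨hab.le, le_refl b⟩
  -- denominators in [a,b]
  have hd1 : ∀ t ∈ Set.Icc (0:ℝ) 1, t * b + (1 - t) * a ∈ Set.Icc a b := by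
    intro t ht; constructor <;> nlinarith [ht.1, ht.2]
  have hd2 : ∀ t ∈ Set.Icc (0:ℝ) 1, t * a + (1 - t) * b ∈ Set.Icc a b := by
    intro t ht; constructor <;> nlinarith [ht.1, ht.2]
  -- membership of composed points
  have hmemgen : ∀ d : ℝ, d ∈ Set.Icc a b → a * b / d ∈ Set.Icc a b := by
    intro d hd
    have hdp : 0 < d := lt_of_lt_of_le ha hd.1
    constructor
    · rw [le_div_iff₀ hdp]; nlinarith [hd.2]
    · rw [div_le_iff₀ hdp]; nlinarith [hd.1]
  -- upper bound on composed values
  have hub1 : ∀ t ∈ Set.Icc (0:ℝ) 1, f (a * b / (t * b + (1 - t) * a)) ≤ C := by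
    intro t ht
    have h := hf b hbI a haI t ht
    have harg : b * a / (t * b + (1 - t) * a) = a * b / (t * b + (1 - t) * a) := by ring_nf
    rw [harg] at h
    calc f (a * b / (t * b + (1 - t) * a)) ≤ t * f a + (1 - t) * f b := h
      _ ≤ C := by
          have h1 : f a ≤ C := le_max_left _ _
          have h2 : f b ≤ C := le_max_right _ _
          nlinarith [ht.1, ht.2]
  have hub2 : ∀ t ∈ Set.Icc (0:ℝ) 1, f (a * b / (t * a + (1 - t) * b)) ≤ C := by
    intro t ht
    have h := hf a haI b hbI t ht
    calc f (a * b / (t * a + (1 - t) * b)) ≤ t * f b + (1 - t) * f a := h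
      _ ≤ C := by
          have h1 : f a ≤ C := le_max_left _ _
          have h2 : f b ≤ C := le_max_right _ _
          nlinarith [ht.1, ht.2]
  -- midpoint inequality
  have hmid : ∀ t ∈ Set.Icc (0:ℝ) 1,
      2 * m ≤ f (a * b / (t * b + (1 - t) * a)) + f (a * b / (t * a + (1 - t) * b)) := by
    intro t ht
    set D1 : ℝ := t * b + (1 - t) * a with hD1
    set D2 : ℝ := t * a + (1 - t) * b with hD2
    have hD1p : 0 < D1 := lt_of_lt_of_le ha (hd1 t ht).1
    have hD2p : 0 < D2 := lt_of_lt_of_le ha (hd2 t ht).1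
    set x : ℝ := a * b / D1 with hx
    set y : ℝ := a * b / D2 with hy
    have hxI : x ∈ Set.Icc a b := hmemgen D1 (hd1 t ht)
    have hyI : y ∈ Set.Icc a b := hmemgen D2 (hd2 t ht)
    have h := hf x hxI y hyI (1/2) (by norm_num)
    have hsum : D1 + D2 = a + b := by rw [hD1, hD2]; ring
    have habp : (0:ℝ) < a + b := by linarith
    have harg : x * y / ((1:ℝ)/2 * x + (1 - (1:ℝ)/2) * y) = 2 * a * b / (a + b) := by
      have hnum : (1:ℝ)/2 * x + (1 - (1:ℝ)/2) * y = a * b * (a + b) / (2 * (D1 * D2)) := by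
        rw [hx, hy, ← hsum]; field_simp; ring
      have hxy' : x * y = (a * b) ^ 2 / (D1 * D2) := by
        rw [hx, hy]; rw [div_mul_div_comm]; ring_nf
      rw [hnum, hxy', div_div_div_comm]
      have h2 : D1 * D2 / (2 * (D1 * D2)) = 1 / 2 := by
        rw [mul_comm 2 (D1 * D2), div_mul_eq_div_div, div_self (by positivity : D1 * D2 ≠ 0)]
      rw [h2]
      field_simp [ha.ne', hb.ne', habp.ne']
    rw [harg] at h
    linarith [h]
  -- integrability of both integrands
  have hint1 : IntervalIntegrable (fun t => t ^ (α - 1) * f (a * b / (t * b + (1 - t) * a)))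
      MeasureTheory.volume 0 1 := by
    have heq : (fun t : ℝ => t ^ (α - 1) * f (a * b / (t * b + (1 - t) * a)))
        = fun t : ℝ => t ^ (α - 1) * f (a * b / (a + t * (b - a))) := by
      funext t; ring_nf
    rw [heq]
    apply key_integrable f a b ha hab hintOn a (b - a) (by linarith : (b - a) ≠ 0)
      (c := 2 * m - C) (C := C)
    · intro t ht
      have := hd1 t ht
      have harg : a + t * (b - a) = t * b + (1 - t) * a := by ring
      rw [harg]; exact this
    · intro t ht
      have harg : a + t * (b - a) = t * b + (1 - t) * a := by ring
      rw [harg]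
      exact ⟨by linarith [hub2 t ht, hmid t ht], hub1 t ht⟩
    · exact hα
  have hint2 : IntervalIntegrable (fun t => t ^ (α - 1) * f (a * b / (t * a + (1 - t) * b)))
      MeasureTheory.volume 0 1 := by
    have heq : (fun t : ℝ => t ^ (α - 1) * f (a * b / (t * a + (1 - t) * b)))
        = fun t : ℝ => t ^ (α - 1) * f (a * b / (b + t * (a - b))) := by
      funext t; ring_nf
    rw [heq]
    apply key_integrable f a b ha hab hintOn b (a - b)
      (by intro h; apply absurd (by linarith : a = b) hab.ne : (a - b) ≠ 0)
      (c := 2 * m - C) (C := C)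
    · intro t ht
      have := hd2 t ht
      have harg : b + t * (a - b) = t * a + (1 - t) * b := by ring
      rw [harg]; exact this
    · intro t ht
      have harg : b + t * (a - b) = t * a + (1 - t) * b := by ring
      rw [harg]
      exact ⟨by linarith [hub1 t ht, hmid t ht], hub2 t ht⟩
    · exact hα
  -- compare integrals
  have hconst : IntervalIntegrable (fun t : ℝ => 2 * m * t ^ (α - 1))
      MeasureTheory.volume 0 1 :=
    (intervalIntegral.intervalIntegrable_rpow' (by linarith)).const_mul (2 * m)
  have hmono : (∫ t in (0:ℝ)..1, 2 * m * t ^ (α - 1)) ≤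
      ∫ t in (0:ℝ)..1, (t ^ (α - 1) * f (a * b / (t * b + (1 - t) * a))
        + t ^ (α - 1) * f (a * b / (t * a + (1 - t) * b))) := by
    apply intervalIntegral.integral_mono_on zero_le_one hconst (hint1.add hint2)
    intro t ht
    have hrp : (0:ℝ) ≤ t ^ (α - 1) := Real.rpow_nonneg ht.1 _
    nlinarith [hmid t ht, hrp]
  have hsplit : (∫ t in (0:ℝ)..1, (t ^ (α - 1) * f (a * b / (t * b + (1 - t) * a))
        + t ^ (α - 1) * f (a * b / (t * a + (1 - t) * b))))
      = (∫ t in (0:ℝ)..1, t ^ (α - 1) * f (a * b / (t * b + (1 - t) * a)))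
        + ∫ t in (0:ℝ)..1, t ^ (α - 1) * f (a * b / (t * a + (1 - t) * b)) :=
    intervalIntegral.integral_add hint1 hint2
  have hval : (∫ t in (0:ℝ)..1, 2 * m * t ^ (α - 1)) = 2 * m / α := by
    rw [intervalIntegral.integral_const_mul]
    rw [integral_rpow (Or.inl (by linarith))]
    rw [Real.one_rpow, Real.zero_rpow (by intro h; nlinarith [h] : α - 1 + 1 ≠ 0)]
    field_simp
    rw [sub_add_cancel, sub_zero, mul_one, mul_div_assoc, div_self hα.ne', mul_one]
  rw [hval, hsplit] at hmono
  set S : ℝ := (∫ t in (0:ℝ)..1, t ^ (α - 1) * f (a * b / (t * b + (1 - t) * a)))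
    + ∫ t in (0:ℝ)..1, t ^ (α - 1) * f (a * b / (t * a + (1 - t) * b))
  have : m = α / 2 * (2 * m / α) := by field_simp
  calc m = α / 2 * (2 * m / α) := this
    _ ≤ α / 2 * S := mul_le_mul_of_nonneg_left hmono (by linarith)
end

section
/- Let f : I ⊆ (0,∞) → ℝ be harmonically convex on [a,b] with a < b and f ∈ L¹[a,b], and α > 0. Then the second fractional Hermite–Hadamard inequality holds: α [∫_0^1 t^{α−1} f(ab/(tb+(1−t)a)) dt + ∫_0^1 t^{α−1} f(ab/(ta+(1−t)b)) dt] ≤ f(a) + f(b). -/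
open MeasureTheory Set

private lemma hh_mem_Icc (a b : ℝ) (ha : 0 < a) (hab : a < b) {t : ℝ}
    (ht : t ∈ Icc (0:ℝ) 1) : a * b / (a + t * (b - a)) ∈ Icc a b := by
  obtain ⟨ht0, ht1⟩ := ht
  have hd1 : a ≤ a + t * (b - a) := by nlinarith
  have hd2 : a + t * (b - a) ≤ b := by nlinarith
  have hdpos : 0 < a + t * (b - a) := lt_of_lt_of_le ha hd1
  constructor
  · rw [le_div_iff₀ hdpos]; nlinarith
  · rw [div_le_iff₀ hdpos]; nlinarith

private lemma hh_image (a b : ℝ) (ha : 0 < a) (hab : a < b) :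
    (fun t : ℝ => a * b / (a + t * (b - a))) '' Ioo 0 1 = Ioo a b := by
  have hb : 0 < b := lt_trans ha hab
  ext y
  constructor
  · rintro ⟨t, ⟨ht0, ht1⟩, rfl⟩
    have hd1 : a < a + t * (b - a) := by nlinarith
    have hd2 : a + t * (b - a) < b := by nlinarith
    have hdpos : 0 < a + t * (b - a) := lt_trans ha hd1
    constructor
    · rw [lt_div_iff₀ hdpos]; nlinarith
    · rw [div_lt_iff₀ hdpos]; nlinarith
  · rintro ⟨hy1, hy2⟩
    have hy0 : 0 < y := lt_trans ha hy1
    have hby : 0 < b - y := by linarith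
    have hba : 0 < b - a := by linarith
    refine ⟨a * (b - y) / (y * (b - a)), ⟨by positivity, ?_⟩, ?_⟩
    · rw [div_lt_one (by positivity)]; nlinarith
    · have hden : a + a * (b - y) / (y * (b - a)) * (b - a) = a * b / y := by
        field_simp; ring
      show a * b / (a + a * (b - y) / (y * (b - a)) * (b - a)) = y
      rw [hden]
      field_simp

private lemma hh_aesm (f : ℝ → ℝ) (a b : ℝ) (ha : 0 < a) (hab : a < b)
    (hI : IntegrableOn f (Ioo a b)) :
    AEStronglyMeasurable (fun t => f (a * b / (a + t * (b - a))))
      (volume.restrict (Ioo (0:ℝ) 1)) := by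
  have hb : 0 < b := lt_trans ha hab
  set φ : ℝ → ℝ := fun t => a * b / (a + t * (b - a)) with hφ
  set φ' : ℝ → ℝ := fun t => -(a * b * (b - a)) / (a + t * (b - a)) ^ 2 with hφ'
  have hden : ∀ t ∈ Ioo (0:ℝ) 1, 0 < a + t * (b - a) := by
    rintro t ⟨ht0, ht1⟩; nlinarith
  have hderiv : ∀ t ∈ Ioo (0:ℝ) 1, HasDerivWithinAt φ (φ' t) (Ioo 0 1) t := by
    intro t ht
    have hd := hden t ht
    have h1 : HasDerivAt (fun x : ℝ => a + x * (b - a)) (b - a) t := by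
      simpa using ((hasDerivAt_id t).mul_const (b - a)).const_add a
    have h2 := (h1.inv hd.ne').const_mul (a * b)
    have h3 : HasDerivAt φ (a * b * (-(b - a) / (a + t * (b - a)) ^ 2)) t := by
      simpa only [hφ, div_eq_mul_inv, Pi.inv_apply] using h2
    have h4 : φ' t = a * b * (-(b - a) / (a + t * (b - a)) ^ 2) := by
      simp only [hφ']; field_simp
    rw [h4]
    exact h3.hasDerivWithinAt
  have hinj : InjOn φ (Ioo 0 1) := by
    intro x hx y hy hxy
    have hdx := hden x hx
    have hdy := hden y hy
    have hab0 : (0:ℝ) < a * b := by positivity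
    simp only [hφ] at hxy
    rw [div_eq_div_iff hdx.ne' hdy.ne'] at hxy
    have h5 := mul_left_cancel₀ hab0.ne' hxy
    have h6 : x * (b - a) = y * (b - a) := by linarith
    exact mul_right_cancel₀ (by linarith : b - a ≠ 0) h6
  have hI' : IntegrableOn f (φ '' Ioo 0 1) := by
    rw [hφ, hh_image a b ha hab]; exact hI
  have hcov := (integrableOn_image_iff_integrableOn_abs_deriv_smul
    measurableSet_Ioo hderiv hinj f).1 hI'
  have hm1 : AEStronglyMeasurable (fun x => |φ' x| • f (φ x))
      (volume.restrict (Ioo 0 1)) := hcov.aestronglyMeasurable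
  simp only [smul_eq_mul] at hm1
  have hmc : Measurable fun x : ℝ => |φ' x|⁻¹ := by
    apply Measurable.inv
    apply Measurable.abs
    exact measurable_const.div (((measurable_id.mul_const (b - a)).const_add a).pow_const 2)
  have hm2 := (hmc.aestronglyMeasurable).mul hm1
  refine hm2.congr ?_
  filter_upwards [ae_restrict_mem measurableSet_Ioo] with x hx
  have hd := hden x hx
  have hne : φ' x ≠ 0 := by
    apply div_ne_zero
    · exact neg_ne_zero.2 (mul_pos (mul_pos ha hb) (sub_pos.2 hab)).ne'
    · exact pow_ne_zero 2 hd.ne'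
  simp only [Pi.mul_apply]
  rw [← mul_assoc, inv_mul_cancel₀ (abs_ne_zero.2 hne), one_mul]

private lemma hh_bdd (f : ℝ → ℝ) (a b : ℝ) (ha : 0 < a) (hab : a < b)
    (hf : ∀ x ∈ Set.Icc a b, ∀ y ∈ Set.Icc a b, ∀ t ∈ Set.Icc (0:ℝ) 1,
      f (x * y / (t * x + (1 - t) * y)) ≤ t * f y + (1 - t) * f x) :
    ∃ C, ∀ t ∈ Icc (0:ℝ) 1, |f (a * b / (a + t * (b - a)))| ≤ C := by
  have hb : 0 < b := lt_trans ha hab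
  set M := max (f a) (f b) with hM
  have hamem : a ∈ Icc a b := ⟨le_refl a, hab.le⟩
  have hbmem : b ∈ Icc a b := ⟨hab.le, le_refl b⟩
  have hup : ∀ t ∈ Icc (0:ℝ) 1, f (a * b / (a + t * (b - a))) ≤ M := by
    intro t ht
    have h1 := hf b hbmem a hamem t ht
    have r1 : b * a / (t * b + (1 - t) * a) = a * b / (a + t * (b - a)) := by ring_nf
    rw [r1] at h1
    calc f (a * b / (a + t * (b - a))) ≤ t * f a + (1 - t) * f b := h1
      _ ≤ t * M + (1 - t) * M :=
        add_le_add (mul_le_mul_of_nonneg_left (le_max_left _ _) ht.1)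
          (mul_le_mul_of_nonneg_left (le_max_right _ _) (by linarith [ht.2]))
      _ = M := by ring
  have hlow : ∀ t ∈ Icc (0:ℝ) 1,
      2 * f (2 * a * b / (a + b)) - M ≤ f (a * b / (a + t * (b - a))) := by
    intro t ht
    have ht' : 1 - t ∈ Icc (0:ℝ) 1 := ⟨by linarith [ht.2], by linarith [ht.1]⟩
    have hmem1 := hh_mem_Icc a b ha hab ht
    have hmem2 := hh_mem_Icc a b ha hab ht'
    have key := hf (a * b / (a + (1 - t) * (b - a))) hmem2
      (a * b / (a + t * (b - a))) hmem1 (1/2) (by norm_num)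
    have hd1 : (0:ℝ) < a + (1 - t) * (b - a) := by nlinarith [ht.1, ht.2]
    have hd2 : (0:ℝ) < a + t * (b - a) := by nlinarith [ht.1, ht.2]
    have harg : a * b / (a + (1 - t) * (b - a)) * (a * b / (a + t * (b - a))) /
        (1 / 2 * (a * b / (a + (1 - t) * (b - a))) + (1 - 1 / 2) * (a * b / (a + t * (b - a))))
        = 2 * a * b / (a + b) := by
      rw [div_eq_div_iff]
      · field_simp
        ring
      · have hmid : 1 / 2 * (a * b / (a + (1 - t) * (b - a))) +
            (1 - 1 / 2) * (a * b / (a + t * (b - a))) > 0 := by positivity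
        exact hmid.ne'
      · positivity
    rw [harg] at key
    have hupp := hup (1 - t) ht'
    linarith [key, hupp]
  refine ⟨max M (M - 2 * f (2 * a * b / (a + b))), fun t ht => abs_le.mpr ⟨?_, ?_⟩⟩
  · have := hlow t ht
    have h2 := le_max_right M (M - 2 * f (2 * a * b / (a + b)))
    linarith
  · exact le_trans (hup t ht) (le_max_left _ _)

theorem stmt_6 (f : ℝ → ℝ) (a b : ℝ) (ha : 0 < a) (hab : a < b)
    (hf : ∀ x ∈ Set.Icc a b, ∀ y ∈ Set.Icc a b, ∀ t ∈ Set.Icc (0:ℝ) 1,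
      f (x * y / (t * x + (1 - t) * y)) ≤ t * f y + (1 - t) * f x)
    (hint : IntervalIntegrable f MeasureTheory.volume a b)
    (α : ℝ) (hα : 0 < α) :
    α * ((∫ t in (0:ℝ)..1, t ^ (α - 1) * f (a * b / (t * b + (1 - t) * a))) +
        ∫ t in (0:ℝ)..1, t ^ (α - 1) * f (a * b / (t * a + (1 - t) * b))) ≤
      f a + f b := by
  have hb : 0 < b := lt_trans ha hab
  have e1 : ∀ t : ℝ, a * b / (t * b + (1 - t) * a) = a * b / (a + t * (b - a)) := by
    intro t; ring_nf
  have e2 : ∀ t : ℝ, a * b / (t * a + (1 - t) * b) = a * b / (a + (1 - t) * (b - a)) := by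
    intro t; ring_nf
  simp only [e1, e2]
  -- integrability of the two integrands
  have hIoo : IntegrableOn f (Ioo a b) := hint.1.mono_set Ioo_subset_Ioc_self
  have hm1 : AEStronglyMeasurable (fun t => f (a * b / (a + t * (b - a))))
      (volume.restrict (Ioo (0:ℝ) 1)) := hh_aesm f a b ha hab hIoo
  have hmp : MeasurePreserving (fun t : ℝ => 1 - t) volume volume := by
    have h1 := Measure.measurePreserving_neg (volume : Measure ℝ)
    have h2 := measurePreserving_add_left (volume : Measure ℝ) 1
    simpa [Function.comp_def, sub_eq_add_neg] using h2.comp h1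
  have hpre : (fun t : ℝ => 1 - t) ⁻¹' (Ioo 0 1) = Ioo (0:ℝ) 1 := by
    ext x
    simp only [mem_preimage, mem_Ioo]
    constructor <;> rintro ⟨h1, h2⟩ <;> exact ⟨by linarith, by linarith⟩
  have hmp2 := hmp.restrict_preimage (measurableSet_Ioo (a := (0:ℝ)) (b := 1))
  rw [hpre] at hmp2
  have hm2 : AEStronglyMeasurable (fun t => f (a * b / (a + (1 - t) * (b - a))))
      (volume.restrict (Ioo (0:ℝ) 1)) :=
    hm1.comp_quasiMeasurePreserving hmp2.quasiMeasurePreserving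
  obtain ⟨C, hC⟩ := hh_bdd f a b ha hab hf
  have hrp : IntervalIntegrable (fun t : ℝ => t ^ (α - 1)) volume 0 1 :=
    intervalIntegral.intervalIntegrable_rpow' (by linarith)
  have hrpIoo : IntegrableOn (fun t : ℝ => t ^ (α - 1)) (Ioo 0 1) :=
    hrp.1.mono_set Ioo_subset_Ioc_self
  have hint1 : IntervalIntegrable
      (fun t => t ^ (α - 1) * f (a * b / (a + t * (b - a)))) volume 0 1 := by
    rw [intervalIntegrable_iff_integrableOn_Ioc_of_le (by norm_num : (0:ℝ) ≤ 1)]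
    have h := Integrable.bdd_mul (c := C) hrpIoo hm1 ?_
    · have h' : IntegrableOn
          (fun t => t ^ (α - 1) * f (a * b / (a + t * (b - a)))) (Ioo 0 1) := by
        simpa [mul_comm, IntegrableOn] using h
      exact h'.congr_set_ae Ioo_ae_eq_Ioc.symm
    · filter_upwards [ae_restrict_mem measurableSet_Ioo] with t ht
      exact hC t (Ioo_subset_Icc_self ht)
  have hint2 : IntervalIntegrable
      (fun t => t ^ (α - 1) * f (a * b / (a + (1 - t) * (b - a)))) volume 0 1 := by
    rw [intervalIntegrable_iff_integrableOn_Ioc_of_le (by norm_num : (0:ℝ) ≤ 1)]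
    have h := Integrable.bdd_mul (c := C) hrpIoo hm2 ?_
    · have h' : IntegrableOn
          (fun t => t ^ (α - 1) * f (a * b / (a + (1 - t) * (b - a)))) (Ioo 0 1) := by
        simpa [mul_comm, IntegrableOn] using h
      exact h'.congr_set_ae Ioo_ae_eq_Ioc.symm
    · filter_upwards [ae_restrict_mem measurableSet_Ioo] with t ht
      have ht' : 1 - t ∈ Icc (0:ℝ) 1 := ⟨by linarith [ht.2], by linarith [ht.1]⟩
      exact hC (1 - t) ht'
  -- pointwise estimate
  have hsum : ∀ t ∈ Icc (0:ℝ) 1,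
      t ^ (α - 1) * f (a * b / (a + t * (b - a))) +
        t ^ (α - 1) * f (a * b / (a + (1 - t) * (b - a))) ≤
      t ^ (α - 1) * (f a + f b) := by
    intro t ht
    have hamem : a ∈ Icc a b := ⟨le_refl a, hab.le⟩
    have hbmem : b ∈ Icc a b := ⟨hab.le, le_refl b⟩
    have h1 := hf b hbmem a hamem t ht
    have h2 := hf a hamem b hbmem t ht
    have r1 : b * a / (t * b + (1 - t) * a) = a * b / (a + t * (b - a)) := by ring_nf
    have r2 : a * b / (t * a + (1 - t) * b) = a * b / (a + (1 - t) * (b - a)) := by ring_nf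
    rw [r1] at h1
    rw [r2] at h2
    have hpow : 0 ≤ t ^ (α - 1) := Real.rpow_nonneg ht.1 _
    have hs : f (a * b / (a + t * (b - a))) + f (a * b / (a + (1 - t) * (b - a)))
        ≤ f a + f b := by linarith
    calc t ^ (α - 1) * f (a * b / (a + t * (b - a))) +
          t ^ (α - 1) * f (a * b / (a + (1 - t) * (b - a)))
        = t ^ (α - 1) * (f (a * b / (a + t * (b - a))) +
            f (a * b / (a + (1 - t) * (b - a)))) := by ring
      _ ≤ t ^ (α - 1) * (f a + f b) := mul_le_mul_of_nonneg_left hs hpow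
  have hintc : IntervalIntegrable (fun t : ℝ => t ^ (α - 1) * (f a + f b)) volume 0 1 :=
    hrp.mul_const _
  have hadd := intervalIntegral.integral_add hint1 hint2
  have hmono := intervalIntegral.integral_mono_on (by norm_num : (0:ℝ) ≤ 1)
    (hint1.add hint2) hintc hsum
  have hval : (∫ t in (0:ℝ)..1, t ^ (α - 1) * (f a + f b)) = (f a + f b) / α := by
    rw [intervalIntegral.integral_mul_const, integral_rpow
      (Or.inl (by linarith : (-1:ℝ) < α - 1))]
    have hone : α - 1 + 1 = α := by ring
    rw [hone, Real.one_rpow, Real.zero_rpow hα.ne']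
    ring
  have hfinal : (∫ t in (0:ℝ)..1, t ^ (α - 1) * f (a * b / (a + t * (b - a)))) +
      (∫ t in (0:ℝ)..1, t ^ (α - 1) * f (a * b / (a + (1 - t) * (b - a)))) ≤
      (f a + f b) / α := by
    rw [← hadd]
    rw [← hval]
    exact hmono
  calc α * ((∫ t in (0:ℝ)..1, t ^ (α - 1) * f (a * b / (a + t * (b - a)))) +
        ∫ t in (0:ℝ)..1, t ^ (α - 1) * f (a * b / (a + (1 - t) * (b - a))))
      ≤ α * ((f a + f b) / α) := mul_le_mul_of_nonneg_left hfinal hα.le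
    _ = f a + f b := by field_simp
end

section
/- For 0 < a < b, α > 0 and A_t = ta + (1−t)b: ∫_0^1 t [(1−t)^α + t^α]/A_t² dt = (b^{−2}/(α+2)) [(1/(α+1)) ₂F₁(2,2;α+3;1−a/b) + ₂F₁(2,α+2;α+3;1−a/b)]. -/
noncomputable def F21 (p q c z : ℝ) : ℝ :=
  (Real.Gamma c / (Real.Gamma q * Real.Gamma (c - q))) *
    ∫ s in (0:ℝ)..1, s ^ (q - 1) * (1 - s) ^ (c - q - 1) * (1 - z * s) ^ (-p)

theorem stmt_13 (a b α : ℝ) (ha : 0 < a) (hab : a < b) (hα : 0 < α) :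
    ∫ t in (0:ℝ)..1, t * ((1 - t) ^ α + t ^ α) / (t * a + (1 - t) * b) ^ 2 =
      (b ^ (-(2:ℝ)) / (α + 2)) *
        ((1 / (α + 1)) * F21 2 2 (α + 3) (1 - a / b) + F21 2 (α + 2) (α + 3) (1 - a / b)) := by
  have hb : 0 < b := ha.trans hab
  set z : ℝ := 1 - a / b with hz
  have hz0 : 0 ≤ z := by
    have : a / b < 1 := (div_lt_one hb).mpr hab
    simp only [hz]; linarith
  have hz1 : z < 1 := by
    have : 0 < a / b := div_pos ha hb
    simp only [hz]; linarith
  have hpos : ∀ t ∈ Set.Icc (0:ℝ) 1, 0 < 1 - z * t := by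
    intro t ht
    nlinarith [ht.1, ht.2]
  have huIcc : Set.uIcc (0:ℝ) 1 = Set.Icc 0 1 := Set.uIcc_of_le (by norm_num)
  -- the two basic integrals
  set I1 : ℝ := ∫ t in (0:ℝ)..1, t * (1 - t) ^ α * (1 - z * t) ^ (-(2:ℝ)) with hI1
  set I2 : ℝ := ∫ t in (0:ℝ)..1, t ^ (α + 1) * (1 - z * t) ^ (-(2:ℝ)) with hI2
  -- continuity / integrability
  have hc0 : ContinuousOn (fun t : ℝ => (1 - z * t) ^ (-(2:ℝ))) (Set.Icc 0 1) :=
    ((continuous_const.sub (continuous_const.mul continuous_id)).continuousOn).rpow_const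
      (fun x hx => Or.inl (hpos x hx).ne')
  have hc1 : ContinuousOn (fun t : ℝ => t * (1 - t) ^ α * (1 - z * t) ^ (-(2:ℝ)))
      (Set.Icc 0 1) := by
    exact (continuousOn_id.mul
      (((continuous_const.sub continuous_id).continuousOn).rpow_const
        (fun x _ => Or.inr hα.le))).mul hc0
  have hc2 : ContinuousOn (fun t : ℝ => t ^ (α + 1) * (1 - z * t) ^ (-(2:ℝ)))
      (Set.Icc 0 1) :=
    (continuousOn_id.rpow_const (fun x _ => Or.inr (by linarith))).mul hc0
  have hi1 : IntervalIntegrable (fun t : ℝ => t * (1 - t) ^ α * (1 - z * t) ^ (-(2:ℝ)))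
      MeasureTheory.volume 0 1 := (huIcc ▸ hc1).intervalIntegrable
  have hi2 : IntervalIntegrable (fun t : ℝ => t ^ (α + 1) * (1 - z * t) ^ (-(2:ℝ)))
      MeasureTheory.volume 0 1 := (huIcc ▸ hc2).intervalIntegrable
  have hbpow : b ^ (-(2:ℝ)) = (b ^ 2)⁻¹ := by
    rw [Real.rpow_neg hb.le, show ((2:ℝ)) = ((2:ℕ):ℝ) by norm_num, Real.rpow_natCast]
  -- LHS
  have hLHS : (∫ t in (0:ℝ)..1, t * ((1 - t) ^ α + t ^ α) / (t * a + (1 - t) * b) ^ 2)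
      = b ^ (-(2:ℝ)) * (I1 + I2) := by
    rw [hI1, hI2, ← intervalIntegral.integral_add hi1 hi2,
      ← intervalIntegral.integral_const_mul]
    apply intervalIntegral.integral_congr
    intro t ht
    rw [huIcc] at ht
    have h1 : t * a + (1 - t) * b = b * (1 - z * t) := by
      rw [hz]
      have hba : b * (a / b) = a := mul_div_cancel₀ a hb.ne'
      linear_combination (-t) * hba
    have h2 : 0 < 1 - z * t := hpos t ht
    have h3 : (1 - z * t) ^ (-(2:ℝ)) = ((1 - z * t) ^ 2)⁻¹ := by
      rw [Real.rpow_neg h2.le, show ((2:ℝ)) = ((2:ℕ):ℝ) by norm_num, Real.rpow_natCast]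
    have h4 : t ^ (α + 1) = t * t ^ α := by
      rcases eq_or_lt_of_le ht.1 with h | h
      · rw [← h]; simp [Real.zero_rpow (show α + 1 ≠ 0 by linarith)]
      · rw [Real.rpow_add h, Real.rpow_one]; ring
    simp only [h1, h3, h4, hbpow]
    rw [mul_pow, div_eq_mul_inv, mul_inv]
    ring
  -- RHS : compute the two F21 values
  have hΓ1 : Real.Gamma (α + 3) = (α + 2) * (α + 1) * Real.Gamma (α + 1) := by
    rw [show α + 3 = (α + 2) + 1 by ring, Real.Gamma_add_one (by linarith),
      show α + 2 = (α + 1) + 1 by ring, Real.Gamma_add_one (by linarith)]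
    ring
  have hΓ2 : Real.Gamma (α + 3) = (α + 2) * Real.Gamma (α + 2) := by
    rw [show α + 3 = (α + 2) + 1 by ring, Real.Gamma_add_one (by linarith)]
  have hΓa1 : Real.Gamma (α + 1) ≠ 0 := (Real.Gamma_pos_of_pos (by linarith)).ne'
  have hΓa2 : Real.Gamma (α + 2) ≠ 0 := (Real.Gamma_pos_of_pos (by linarith)).ne'
  have hF1 : F21 2 2 (α + 3) z
      = (Real.Gamma (α + 3) / (Real.Gamma 2 * Real.Gamma (α + 1))) * I1 := by
    rw [F21, show α + 3 - 2 = α + 1 by ring]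
    congr 1
    rw [hI1]
    apply intervalIntegral.integral_congr
    intro s _
    simp only [show (2:ℝ) - 1 = 1 by norm_num, show α + 1 - 1 = α by ring, Real.rpow_one]
  have hF2 : F21 2 (α + 2) (α + 3) z
      = (Real.Gamma (α + 3) / (Real.Gamma (α + 2) * Real.Gamma 1)) * I2 := by
    rw [F21, show α + 3 - (α + 2) = 1 by ring]
    congr 1
    rw [hI2]
    apply intervalIntegral.integral_congr
    intro s _
    simp only [show (1:ℝ) - 1 = 0 by norm_num, show α + 2 - 1 = α + 1 by ring,
      Real.rpow_zero, mul_one]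
  rw [hΓ1] at hF1
  rw [hΓ2] at hF2
  rw [hLHS, hF1, hF2, Real.Gamma_two, Real.Gamma_one]
  field_simp
end

section
/- Let f : I ⊆ (0,∞) → ℝ be differentiable, a, b ∈ I° with a < b, f' ∈ L¹[a,b], q > 1 with 1/p + 1/q = 1, α > 0, and |f'|^q harmonically convex on [a,b]. Then |I_f(g;α,a,b)| ≤ (a(b−a)/(2b)) (1/(αp+1))^{1/p} ((|f'(b)|^q + |f'(a)|^q)/2)^{1/q} [₂F₁^{1/p}(2p,1;αp+2;1−a/b) + ₂F₁^{1/p}(2p,αp+1;αp+2;1−a/b)]. -/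
set_option maxHeartbeats 1600000

open MeasureTheory intervalIntegral Set

lemma aux_reflect (h : ℝ → ℝ) : ∫ s in (0:ℝ)..1, h (1-s) = ∫ s in (0:ℝ)..1, h s := by
  simpa using intervalIntegral.integral_comp_sub_left h 1

lemma F21_eval1 {r P : ℝ} (hr : 0 < r) (z : ℝ) :
    F21 P (r+1) (r+2) z = (r+1) * ∫ s in (0:ℝ)..1, s ^ r * (1 - z * s) ^ (-P) := by
  have h1 : Real.Gamma (r+2) = (r+1) * Real.Gamma (r+1) := by
    rw [show r+2 = (r+1)+1 by ring, Real.Gamma_add_one (by positivity)]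
  have h2 : Real.Gamma (r+1) ≠ 0 := (Real.Gamma_pos_of_pos (by positivity)).ne'
  have h3 : (r+2) - (r+1) = 1 := by ring
  unfold F21
  rw [h3, Real.Gamma_one, h1]
  have : ∀ s : ℝ, s ^ (r+1-1) * (1-s) ^ ((1:ℝ)-1) * (1 - z*s) ^ (-P)
      = s ^ r * (1 - z*s) ^ (-P) := by
    intro s
    rw [show r+1-1 = r by ring, show (1:ℝ)-1 = 0 by ring, Real.rpow_zero, mul_one]
  simp only [this]
  field_simp

lemma F21_eval2 {r P : ℝ} (hr : 0 < r) (z : ℝ) :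
    F21 P 1 (r+2) z = (r+1) * ∫ s in (0:ℝ)..1, (1-s) ^ r * (1 - z * s) ^ (-P) := by
  have h1 : Real.Gamma (r+2) = (r+1) * Real.Gamma (r+1) := by
    rw [show r+2 = (r+1)+1 by ring, Real.Gamma_add_one (by positivity)]
  have h2 : Real.Gamma (r+1) ≠ 0 := (Real.Gamma_pos_of_pos (by positivity)).ne'
  have h3 : (r+2) - 1 = r+1 := by ring
  unfold F21
  rw [h3, Real.Gamma_one, h1]
  have : ∀ s : ℝ, s ^ ((1:ℝ)-1) * (1-s) ^ (r+1-1) * (1 - z*s) ^ (-P)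
      = (1-s) ^ r * (1 - z*s) ^ (-P) := by
    intro s
    rw [show r+1-1 = r by ring, show (1:ℝ)-1 = 0 by ring, Real.rpow_zero, one_mul]
  simp only [this]
  field_simp
  simp only [mul_comm z]

theorem stmt_14 (I : Set ℝ) (hI : I.OrdConnected) (hIpos : I ⊆ Set.Ioi (0:ℝ))
    (f f' : ℝ → ℝ) (hdiff : ∀ x ∈ interior I, HasDerivAt f (f' x) x)
    (a b : ℝ) (ha : a ∈ interior I) (hb : b ∈ interior I) (hab : a < b)
    (hint : IntervalIntegrable f' MeasureTheory.volume a b)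
    (p q : ℝ) (hq : 1 < q) (hpq : 1/p + 1/q = 1) (α : ℝ) (hα : 0 < α)
    (hconv : ∀ x ∈ Set.Icc a b, ∀ y ∈ Set.Icc a b, ∀ t ∈ Set.Icc (0:ℝ) 1,
      |f' (x * y / (t * x + (1 - t) * y))| ^ q ≤ t * |f' y| ^ q + (1 - t) * |f' x| ^ q)
    (g : ℝ → ℝ) (hg : g = fun x => 1 / x) :
    |(f a + f b) / 2 - (Real.Gamma (α + 1) / 2) * (a * b / (b - a)) ^ α *
        (Jminus α (1 / a) (f ∘ g) (1 / b) + Jplus α (1 / b) (f ∘ g) (1 / a))| ≤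
      (a * (b - a) / (2 * b)) * (1 / (α * p + 1)) ^ (1/p) *
        ((|f' b| ^ q + |f' a| ^ q) / 2) ^ (1/q) *
        ((F21 (2*p) 1 (α*p + 2) (1 - a/b)) ^ (1/p) +
         (F21 (2*p) (α*p + 1) (α*p + 2) (1 - a/b)) ^ (1/p)) := by
  subst hg
  have ha0 : 0 < a := hIpos (interior_subset ha)
  have hb0 : 0 < b := hIpos (interior_subset hb)
  have hba : 0 < b - a := sub_pos.2 hab
  have hIccI : Set.Icc a b ⊆ interior I := hI.interior.out ha hb
  -- conjugate exponents
  have hq0 : 0 < q := lt_trans one_pos hq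
  have h1q : 1/q < 1 := (div_lt_one hq0).2 hq
  have h1q0 : 0 < 1/q := by positivity
  have h1p : 0 < 1/p := by linarith
  have hp0 : 0 < p := (one_div_pos).mp h1p
  have hp1 : 1 < p := (div_lt_one hp0).mp (by linarith)
  have hpq' : p.HolderConjugate q := Real.holderConjugate_iff.mpr ⟨hp1, by rw [← one_div, ← one_div]; exact hpq⟩
  -- setup
  set d : ℝ → ℝ := fun s => a + s * (b - a) with hd
  set ψ : ℝ → ℝ := fun s => a * b / d s with hψdef
  have hdpos : ∀ s ∈ Icc (0:ℝ) 1, 0 < d s := by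
    intro s hs; simp only [hd]; nlinarith [hs.1, hs.2]
  have hdmemab : ∀ s ∈ Icc (0:ℝ) 1, d s ∈ Icc a b := by
    intro s hs; simp only [hd]
    constructor
    · nlinarith [hs.1]
    · nlinarith [hs.2]
  have hψmem : ∀ s ∈ Icc (0:ℝ) 1, ψ s ∈ Icc a b := by
    intro s hs
    have h1 := hdpos s hs
    have h2 := (hdmemab s hs).1
    have h3 := (hdmemab s hs).2
    constructor
    · rw [le_div_iff₀ h1]; nlinarith
    · rw [div_le_iff₀ h1]; nlinarith
  -- derivative of psi
  have hdD : ∀ s : ℝ, HasDerivAt d (b - a) s := by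
    intro s
    simpa [hd] using ((hasDerivAt_id s).mul_const (b - a)).const_add a
  have hψderiv : ∀ s ∈ Icc (0:ℝ) 1, HasDerivAt ψ (-(a*b*(b-a)) / (d s)^2) s := by
    intro s hs
    have h := (hasDerivAt_const s (a*b)).div (hdD s) (hdpos s hs).ne'
    refine h.congr_deriv ?_
    ring
  set Φ : ℝ → ℝ := fun s => f (ψ s) with hΦdef
  set Φ' : ℝ → ℝ := fun s => f' (ψ s) * (-(a*b*(b-a)) / (d s)^2) with hΦ'def
  have hΦderiv : ∀ s ∈ Icc (0:ℝ) 1, HasDerivAt Φ (Φ' s) s := by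
    intro s hs
    exact (hdiff _ (hIccI (hψmem s hs))).comp s (hψderiv s hs)
  have hΦcont : ContinuousOn Φ (Icc 0 1) := fun s hs =>
    ((hΦderiv s hs).continuousAt).continuousWithinAt
  -- convexity bound
  have hbound : ∀ s ∈ Icc (0:ℝ) 1, |f' (ψ s)| ^ q ≤ s * |f' a| ^ q + (1-s) * |f' b| ^ q := by
    intro s hs
    have h := hconv a ⟨le_refl a, hab.le⟩ b ⟨hab.le, le_refl b⟩ (1-s)
      ⟨by linarith [hs.2], by linarith [hs.1]⟩
    have e1 : (1-s) * a + (1 - (1-s)) * b = d s := by simp only [hd]; ring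
    rw [e1] at h
    have e2 : a * b / d s = ψ s := rfl
    rw [e2] at h
    linarith
  set C : ℝ := max |f' a| |f' b| with hCdef
  have hC0 : 0 ≤ C := le_trans (abs_nonneg _) (le_max_left _ _)
  have hCb : ∀ s ∈ Icc (0:ℝ) 1, |f' (ψ s)| ≤ C := by
    intro s hs
    have h := hbound s hs
    have hA : |f' a| ^ q ≤ C ^ q := Real.rpow_le_rpow (abs_nonneg _) (le_max_left _ _) hq0.le
    have hB : |f' b| ^ q ≤ C ^ q := Real.rpow_le_rpow (abs_nonneg _) (le_max_right _ _) hq0.le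
    have h2 : |f' (ψ s)| ^ q ≤ C ^ q := by nlinarith [hs.1, hs.2]
    exact (Real.rpow_le_rpow_iff (abs_nonneg _) hC0 hq0).mp h2
  -- measurability
  have hψmeas : Measurable ψ := by
    apply Measurable.div measurable_const
    fun_prop
  have hDmeas : Measurable (fun s => deriv f (ψ s)) := (measurable_deriv f).comp hψmeas
  have haeeq : (fun s => f' (ψ s)) =ᵐ[volume.restrict (Ioc (0:ℝ) 1)]
      (fun s => deriv f (ψ s)) := by
    refine (ae_restrict_mem measurableSet_Ioc).mono fun s hs => ?_
    exact ((hdiff _ (hIccI (hψmem s (Ioc_subset_Icc_self hs)))).deriv).symm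
  have haesm : AEStronglyMeasurable (fun s => f' (ψ s)) (volume.restrict (Ioc (0:ℝ) 1)) :=
    (hDmeas.aestronglyMeasurable).congr haeeq.symm
  -- bounded measurable implies interval integrable
  have hIntOfBdd : ∀ (h : ℝ → ℝ) (M : ℝ),
      AEStronglyMeasurable h (volume.restrict (Ioc (0:ℝ) 1)) →
      (∀ s ∈ Ioc (0:ℝ) 1, ‖h s‖ ≤ M) → IntervalIntegrable h volume 0 1 := by
    intro h M hm hb
    rw [intervalIntegrable_iff_integrableOn_Ioc_of_le zero_le_one]
    refine ⟨hm, ?_⟩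
    refine MeasureTheory.HasFiniteIntegral.restrict_of_bounded (C := M) (by simp) ?_
    exact (ae_restrict_mem measurableSet_Ioc).mono hb
  -- integrability of Φ' and weighted versions
  set MC : ℝ := C * (a*b*(b-a)/a^2) with hMCdef
  have haesmden : AEStronglyMeasurable (fun s : ℝ => -(a*b*(b-a)) / (d s)^2)
      (volume.restrict (Ioc (0:ℝ) 1)) := by
    apply Measurable.aestronglyMeasurable
    fun_prop
  have haesmΦ' : AEStronglyMeasurable Φ' (volume.restrict (Ioc (0:ℝ) 1)) :=
    haesm.mul haesmden
  have hΦ'bd : ∀ s ∈ Ioc (0:ℝ) 1, ‖Φ' s‖ ≤ MC := by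
    intro s hs
    have hs' : s ∈ Icc (0:ℝ) 1 := Ioc_subset_Icc_self hs
    have h1 := hCb s hs'
    have h2 : a ≤ d s := (hdmemab s hs').1
    have h3 : 0 < d s := hdpos s hs'
    have h4 : a^2 ≤ (d s)^2 := by nlinarith
    have h5 : |(-(a*b*(b-a)) / (d s)^2)| ≤ a*b*(b-a)/a^2 := by
      rw [abs_div, abs_neg]
      rw [abs_of_nonneg (by positivity : (0:ℝ) ≤ a*b*(b-a)), abs_of_nonneg (by positivity)]
      apply div_le_div_of_nonneg_left (by positivity) (by positivity) h4
    calc ‖Φ' s‖ = |f' (ψ s)| * |(-(a*b*(b-a)) / (d s)^2)| := abs_mul _ _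
    _ ≤ C * (a*b*(b-a)/a^2) := by
        apply mul_le_mul h1 h5 (abs_nonneg _) hC0
  have hrcont : ∀ r : ℝ, 0 ≤ r → Continuous (fun x : ℝ => x ^ r) := by
    intro r hr
    exact continuous_iff_continuousAt.mpr fun x => Real.continuousAt_rpow_const x r (Or.inr hr)
  have hT1int : IntervalIntegrable (fun s => s^α * Φ' s) volume 0 1 := by
    refine hIntOfBdd _ MC ((((hrcont α hα.le).measurable).aestronglyMeasurable).mul haesmΦ') ?_
    intro s hs
    have h1 : |s ^ α| ≤ 1 := by
      rw [abs_of_nonneg (Real.rpow_nonneg hs.1.le α)]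
      exact Real.rpow_le_one hs.1.le hs.2 hα.le
    have h2 := hΦ'bd s hs
    calc ‖s^α * Φ' s‖ = |s^α| * ‖Φ' s‖ := abs_mul _ _
    _ ≤ 1 * MC := mul_le_mul h1 h2 (abs_nonneg _) zero_le_one
    _ = MC := one_mul _
  have hT2int : IntervalIntegrable (fun s => (1-s)^α * Φ' s) volume 0 1 := by
    refine hIntOfBdd _ MC (((((hrcont α hα.le).comp (by fun_prop : Continuous fun s : ℝ => 1 - s)).measurable).aestronglyMeasurable).mul haesmΦ') ?_
    intro s hs
    have h1 : |(1-s) ^ α| ≤ 1 := by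
      rw [abs_of_nonneg (Real.rpow_nonneg (by linarith [hs.2]) α)]
      exact Real.rpow_le_one (by linarith [hs.2]) (by linarith [hs.1]) hα.le
    have h2 := hΦ'bd s hs
    calc ‖(1-s)^α * Φ' s‖ = |(1-s)^α| * ‖Φ' s‖ := abs_mul _ _
    _ ≤ 1 * MC := mul_le_mul h1 h2 (abs_nonneg _) zero_le_one
    _ = MC := one_mul _
  have hS1int : IntervalIntegrable (fun s => s^(α-1) * Φ s) volume 0 1 := by
    apply (intervalIntegrable_rpow' (by linarith)).mul_continuousOn
    rw [uIcc_of_le zero_le_one]; exact hΦcont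
  have hS2int : IntervalIntegrable (fun s => (1-s)^(α-1) * Φ s) volume 0 1 := by
    have h0 : IntervalIntegrable (fun s : ℝ => (1-s)^(α-1)) volume 0 1 := by
      have := (intervalIntegrable_rpow' (a := 0) (b := 1) (r := α - 1)
        (by linarith)).comp_sub_left 1
      simpa using this.symm
    apply h0.mul_continuousOn
    rw [uIcc_of_le zero_le_one]; exact hΦcont
  set S1 := ∫ s in (0:ℝ)..1, s^(α-1) * Φ s with hS1def
  set S2 := ∫ s in (0:ℝ)..1, (1-s)^(α-1) * Φ s with hS2def
  set T1 := ∫ s in (0:ℝ)..1, s^α * Φ' s with hT1def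
  set T2 := ∫ s in (0:ℝ)..1, (1-s)^α * Φ' s with hT2def
  -- FTC identities
  have hψ1 : ψ 1 = a := by
    simp only [hψdef, hd]
    field_simp
    ring
  have hψ0 : ψ 0 = b := by
    simp only [hψdef, hd]
    field_simp
    ring
  have hFTC1 : α * S1 + T1 = f a := by
    have hder : ∀ s ∈ Ioo (0:ℝ) 1, HasDerivAt (fun u => u^α * Φ u)
        (α * (s^(α-1) * Φ s) + s^α * Φ' s) s := by
      intro s hs
      have h1 : HasDerivAt (fun u : ℝ => u ^ α) (α * s^(α-1)) s :=
        Real.hasDerivAt_rpow_const (Or.inl hs.1.ne')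
      have := h1.mul (hΦderiv s (Ioo_subset_Icc_self hs))
      refine this.congr_deriv ?_
      ring
    have hcont : ContinuousOn (fun u : ℝ => u^α * Φ u) (Icc 0 1) := by
      apply ContinuousOn.mul _ hΦcont
      intro s _
      exact (Real.continuousAt_rpow_const s α (Or.inr hα.le)).continuousWithinAt
    have hintg : IntervalIntegrable (fun s => α * (s^(α-1) * Φ s) + s^α * Φ' s) volume 0 1 :=
      (hS1int.const_mul α).add hT1int
    have h := intervalIntegral.integral_eq_sub_of_hasDerivAt_of_le zero_le_one hcont hder hintg
    rw [intervalIntegral.integral_add (hS1int.const_mul α) hT1int,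
      intervalIntegral.integral_const_mul] at h
    rw [Real.one_rpow, Real.zero_rpow hα.ne'] at h
    simp only [hψ1, one_mul, zero_mul] at h
    simpa [hS1def, hT1def, hΦdef, hψ1] using h
  have hFTC2 : α * S2 - T2 = f b := by
    have hder : ∀ s ∈ Ioo (0:ℝ) 1, HasDerivAt (fun u => -((1-u)^α * Φ u))
        (α * ((1-s)^(α-1) * Φ s) - (1-s)^α * Φ' s) s := by
      intro s hs
      have h0 : HasDerivAt (fun u : ℝ => 1 - u) (-1) s := by
        simpa using (hasDerivAt_id s).const_sub 1
      have h1 : HasDerivAt (fun u : ℝ => (1-u) ^ α) (α * (1-s)^(α-1) * (-1)) s :=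
        (Real.hasDerivAt_rpow_const (p := α)
          (Or.inl (by intro hcon; rw [sub_eq_zero] at hcon; exact (ne_of_lt hs.2) hcon.symm))).comp s h0
      have := (h1.mul (hΦderiv s (Ioo_subset_Icc_self hs))).neg
      refine this.congr_deriv ?_
      ring
    have hcont : ContinuousOn (fun u : ℝ => -((1-u)^α * Φ u)) (Icc 0 1) := by
      apply ContinuousOn.neg
      apply ContinuousOn.mul _ hΦcont
      intro s _
      exact ((Real.continuousAt_rpow_const _ α (Or.inr hα.le)).comp
        (by fun_prop : Continuous fun u : ℝ => 1 - u).continuousAt).continuousWithinAt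
    have hintg : IntervalIntegrable (fun s => α * ((1-s)^(α-1) * Φ s) - (1-s)^α * Φ' s) volume 0 1 :=
      (hS2int.const_mul α).sub hT2int
    have h := intervalIntegral.integral_eq_sub_of_hasDerivAt_of_le zero_le_one hcont hder hintg
    rw [intervalIntegral.integral_sub (hS2int.const_mul α) hT2int,
      intervalIntegral.integral_const_mul] at h
    rw [show (1:ℝ)-1 = 0 by norm_num, show (1:ℝ)-0 = 1 by norm_num,
      Real.zero_rpow hα.ne', Real.one_rpow] at h
    simp only [hψ0, zero_mul, one_mul] at h
    simpa [hS2def, hT2def, hΦdef, hψ0] using h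
  -- substitution to [0,1]
  set cc : ℝ := (b-a)/(a*b) with hccdef
  have hcc0 : 0 < cc := by positivity
  have hend0 : cc * 0 + 1/b = 1/b := by ring
  have hccval : cc = 1/a - 1/b := by
    rw [hccdef]; field_simp
  have hend1' : cc * 1 + 1/b = 1/a := by
    rw [hccval]; ring
  have hccpow : cc * cc^(α-1) = cc^α := by
    rw [show α = 1 + (α-1) by ring, Real.rpow_add hcc0, Real.rpow_one]
    ring_nf
  have hdenom : ∀ s : ℝ, cc * s + 1/b = d s / (a*b) := by
    intro s; simp only [hccdef, hd]; field_simp; ring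
  have hJp : Jplus α (1/b) (f ∘ fun x => 1/x) (1/a) = (cc^α / Real.Gamma α) * S2 := by
    have hsub := intervalIntegral.integral_comp_mul_add
      (a := 0) (b := 1) (fun t => (1/a - t)^(α-1) * f (1/t)) hcc0.ne' (1/b)
    rw [hend0, hend1'] at hsub
    beta_reduce at hsub
    have hcong : ∫ s in (0:ℝ)..1, (1/a - (cc*s + 1/b))^(α-1) * f (1/(cc*s + 1/b))
        = cc^(α-1) * S2 := by
      rw [hS2def, ← intervalIntegral.integral_const_mul]
      apply intervalIntegral.integral_congr
      intro s hs
      beta_reduce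
      rw [uIcc_of_le zero_le_one] at hs
      have e1 : 1/a - (cc*s + 1/b) = cc * (1-s) := by
        rw [hccval]; ring
      have e2 : 1/(cc*s + 1/b) = ψ s := by
        rw [hdenom s, one_div_div]
      rw [e1, e2, Real.mul_rpow hcc0.le (by linarith [hs.2] : (0:ℝ) ≤ 1-s)]
      simp only [hΦdef]; ring
    rw [hcong, smul_eq_mul] at hsub
    have hval : ∫ t in (1/b:ℝ)..(1/a), (1/a - t)^(α-1) * f (1/t)
        = cc * (cc^(α-1) * S2) := by
      rw [hsub]; field_simp
    unfold Jplus
    simp only [Function.comp_apply]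
    rw [hval, ← hccpow]
    ring
  have hJm : Jminus α (1/a) (f ∘ fun x => 1/x) (1/b) = (cc^α / Real.Gamma α) * S1 := by
    have hsub := intervalIntegral.integral_comp_mul_add
      (a := 0) (b := 1) (fun t => (t - 1/b)^(α-1) * f (1/t)) hcc0.ne' (1/b)
    rw [hend0, hend1'] at hsub
    beta_reduce at hsub
    have hcong : ∫ s in (0:ℝ)..1, ((cc*s + 1/b) - 1/b)^(α-1) * f (1/(cc*s + 1/b))
        = cc^(α-1) * S1 := by
      rw [hS1def, ← intervalIntegral.integral_const_mul]
      apply intervalIntegral.integral_congr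
      intro s hs
      beta_reduce
      rw [uIcc_of_le zero_le_one] at hs
      have e1 : (cc*s + 1/b) - 1/b = cc * s := by ring
      have e2 : 1/(cc*s + 1/b) = ψ s := by
        rw [hdenom s, one_div_div]
      rw [e1, e2, Real.mul_rpow hcc0.le hs.1]
      simp only [hΦdef]; ring
    rw [hcong, smul_eq_mul] at hsub
    have hval : ∫ t in (1/b:ℝ)..(1/a), (t - 1/b)^(α-1) * f (1/t)
        = cc * (cc^(α-1) * S1) := by
      rw [hsub, ← mul_assoc, mul_inv_cancel₀ hcc0.ne', one_mul]
    unfold Jminus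
    simp only [Function.comp_apply]
    rw [hval, ← hccpow]
    ring
  -- the main identity
  have hΓ0 : Real.Gamma α ≠ 0 := (Real.Gamma_pos_of_pos hα).ne'
  have hXcc : (a*b/(b-a))^α * cc^α = 1 := by
    rw [← Real.mul_rpow (by positivity) hcc0.le,
      show a*b/(b-a)*cc = 1 by simp only [hccdef]; field_simp]
    exact Real.one_rpow α
  have hE : (f a + f b) / 2 - (Real.Gamma (α + 1) / 2) * (a * b / (b - a)) ^ α *
      (Jminus α (1 / a) (f ∘ fun x => 1/x) (1 / b) + Jplus α (1 / b) (f ∘ fun x => 1/x) (1 / a))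
      = (T1 - T2)/2 := by
    rw [hJm, hJp, Real.Gamma_add_one hα.ne']
    have hstep : α * Real.Gamma α / 2 * (a*b/(b-a))^α *
        (cc^α / Real.Gamma α * S1 + cc^α / Real.Gamma α * S2)
        = (α*S1 + α*S2)/2 * ((a*b/(b-a))^α * cc^α) := by
      field_simp
    rw [hstep, hXcc, mul_one]
    have h1 : α * S1 = f a - T1 := by linarith
    have h2 : α * S2 = f b + T2 := by linarith
    rw [h1, h2]
    ring
  rw [hE]
  -- Hölder setup
  set μ01 := MeasureTheory.volume.restrict (Ioc (0:ℝ) 1) with hμdef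
  set z : ℝ := 1 - a/b with hzdef
  set K : ℝ := a*b*(b-a) with hKdef
  have hK0 : 0 < K := by positivity
  set w1 : ℝ → ℝ := fun s => s^α * (((d s)^2)⁻¹) with hw1def
  set w2 : ℝ → ℝ := fun s => (1-s)^α * (((d s)^2)⁻¹) with hw2def
  have hdmeas : Measurable d := by simp only [hd]; fun_prop
  have hIntBdd01 : ∀ (h : ℝ → ℝ) (M : ℝ), AEStronglyMeasurable h μ01 →
      (∀ s ∈ Ioc (0:ℝ) 1, ‖h s‖ ≤ M) → Integrable h μ01 := by
    intro h M hm hb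
    refine ⟨hm, ?_⟩
    refine MeasureTheory.HasFiniteIntegral.restrict_of_bounded (C := M) (by simp) ?_
    exact (ae_restrict_mem measurableSet_Ioc).mono hb
  have haesmabs : AEStronglyMeasurable (fun s => |f' (ψ s)|) μ01 := by
    simpa [Real.norm_eq_abs] using haesm.norm
  have hd2le : ∀ s ∈ Ioc (0:ℝ) 1, (((d s)^2)⁻¹) ≤ (a^2)⁻¹ := by
    intro s hs
    have hs' := Ioc_subset_Icc_self hs
    have h2 : a ≤ d s := (hdmemab s hs').1
    have h4 : a^2 ≤ (d s)^2 := by nlinarith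
    exact inv_anti₀ (by positivity) h4
  have hw1nn : ∀ s ∈ Ioc (0:ℝ) 1, 0 ≤ w1 s := by
    intro s hs
    exact mul_nonneg (Real.rpow_nonneg hs.1.le _) (by positivity)
  have hw2nn : ∀ s ∈ Ioc (0:ℝ) 1, 0 ≤ w2 s := by
    intro s hs
    exact mul_nonneg (Real.rpow_nonneg (by linarith [hs.2]) _) (by positivity)
  have hw1bd : ∀ s ∈ Ioc (0:ℝ) 1, ‖w1 s‖ ≤ (a^2)⁻¹ := by
    intro s hs
    rw [Real.norm_eq_abs, abs_of_nonneg (hw1nn s hs)]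
    calc w1 s ≤ 1 * (((d s)^2)⁻¹) := by
          apply mul_le_mul_of_nonneg_right _ (by positivity)
          exact Real.rpow_le_one hs.1.le hs.2 hα.le
    _ ≤ 1 * (a^2)⁻¹ := by
          apply mul_le_mul_of_nonneg_left (hd2le s hs) zero_le_one
    _ = (a^2)⁻¹ := one_mul _
  have hw2bd : ∀ s ∈ Ioc (0:ℝ) 1, ‖w2 s‖ ≤ (a^2)⁻¹ := by
    intro s hs
    rw [Real.norm_eq_abs, abs_of_nonneg (hw2nn s hs)]
    calc w2 s ≤ 1 * (((d s)^2)⁻¹) := by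
          apply mul_le_mul_of_nonneg_right _ (by positivity)
          exact Real.rpow_le_one (by linarith [hs.2]) (by linarith [hs.1]) hα.le
    _ ≤ 1 * (a^2)⁻¹ := by
          apply mul_le_mul_of_nonneg_left (hd2le s hs) zero_le_one
    _ = (a^2)⁻¹ := one_mul _
  have hw1meas : Measurable w1 :=
    ((hrcont α hα.le).measurable).mul ((hdmeas.pow_const 2).inv)
  have hw2meas : Measurable w2 :=
    (((hrcont α hα.le).comp (by fun_prop : Continuous fun s : ℝ => 1-s)).measurable).mul
      ((hdmeas.pow_const 2).inv)
  -- MemLp facts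
  have hMw1 : MeasureTheory.MemLp w1 (ENNReal.ofReal p) μ01 :=
    MeasureTheory.MemLp.of_bound hw1meas.aestronglyMeasurable.restrict ((a^2)⁻¹)
      ((ae_restrict_mem measurableSet_Ioc).mono hw1bd)
  have hMw2 : MeasureTheory.MemLp w2 (ENNReal.ofReal p) μ01 :=
    MeasureTheory.MemLp.of_bound hw2meas.aestronglyMeasurable.restrict ((a^2)⁻¹)
      ((ae_restrict_mem measurableSet_Ioc).mono hw2bd)
  have hMφ : MeasureTheory.MemLp (fun s => |f' (ψ s)|) (ENNReal.ofReal q) μ01 := by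
    refine MeasureTheory.MemLp.of_bound haesmabs C ?_
    refine (ae_restrict_mem measurableSet_Ioc).mono fun s hs => ?_
    rw [Real.norm_eq_abs, abs_abs]
    exact hCb s (Ioc_subset_Icc_self hs)
  -- q-integral bound
  have haesmq : AEStronglyMeasurable (fun s => |f' (ψ s)|^q) μ01 :=
    (hrcont q hq0.le).comp_aestronglyMeasurable haesmabs
  have hφq_int : Integrable (fun s => |f' (ψ s)|^q) μ01 := by
    refine hIntBdd01 _ (C^q) haesmq fun s hs => ?_
    rw [Real.norm_eq_abs, abs_of_nonneg (Real.rpow_nonneg (abs_nonneg _) _)]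
    exact Real.rpow_le_rpow (abs_nonneg _) (hCb s (Ioc_subset_Icc_self hs)) hq0.le
  have hlin_int : Integrable (fun s : ℝ => s * |f' a|^q + (1-s) * |f' b|^q) μ01 := by
    refine hIntBdd01 _ (|f' a|^q + |f' b|^q) ((by fun_prop : Continuous fun s : ℝ => s * |f' a|^q + (1-s) * |f' b|^q).aestronglyMeasurable.restrict) fun s hs => ?_
    have h1 : 0 ≤ |f' a|^q := Real.rpow_nonneg (abs_nonneg _) _
    have h2 : 0 ≤ |f' b|^q := Real.rpow_nonneg (abs_nonneg _) _
    rw [Real.norm_eq_abs, abs_of_nonneg (by nlinarith [hs.1, hs.2])]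
    nlinarith [hs.1, hs.2]
  have hlinval : (∫ s in (0:ℝ)..1, (s * |f' a|^q + (1-s) * |f' b|^q))
      = (|f' b|^q + |f' a|^q)/2 := by
    rw [intervalIntegral.integral_add
      ((by fun_prop : Continuous fun s : ℝ => s * |f' a|^q).intervalIntegrable _ _)
      ((by fun_prop : Continuous fun s : ℝ => (1-s) * |f' b|^q).intervalIntegrable _ _),
      intervalIntegral.integral_mul_const, intervalIntegral.integral_mul_const,
      integral_id,
      intervalIntegral.integral_sub (continuous_const.intervalIntegrable _ _)
        (continuous_id'.intervalIntegrable _ _),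
      integral_id, intervalIntegral.integral_const]
    norm_num
    ring
  have hqle : ∫ s, |f' (ψ s)|^q ∂μ01 ≤ (|f' b|^q + |f' a|^q)/2 := by
    have hmono := MeasureTheory.integral_mono_ae hφq_int hlin_int
      ((ae_restrict_mem measurableSet_Ioc).mono fun s hs =>
        hbound s (Ioc_subset_Icc_self hs))
    have heq : ∫ s, (s * |f' a|^q + (1-s) * |f' b|^q) ∂μ01
        = (|f' b|^q + |f' a|^q)/2 := by
      rw [← hlinval, intervalIntegral.integral_of_le zero_le_one]
    linarith [hmono, heq.le, heq.ge]
  have hqleI : (∫ s in (0:ℝ)..1, |f' (ψ s)|^q) ≤ (|f' b|^q + |f' a|^q)/2 := by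
    rw [intervalIntegral.integral_of_le zero_le_one]; exact hqle
  have hφqnn : 0 ≤ ∫ s in (0:ℝ)..1, |f' (ψ s)|^q :=
    intervalIntegral.integral_nonneg zero_le_one (fun s hs => Real.rpow_nonneg (abs_nonneg _) _)
  -- Hölder
  have hHold : ∀ w : ℝ → ℝ, (∀ s ∈ Ioc (0:ℝ) 1, 0 ≤ w s) →
      MeasureTheory.MemLp w (ENNReal.ofReal p) μ01 →
      (∫ s in (0:ℝ)..1, w s * |f' (ψ s)|) ≤
        (∫ s in (0:ℝ)..1, (w s)^p)^(1/p) * (∫ s in (0:ℝ)..1, |f' (ψ s)|^q)^(1/q) := by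
    intro w hnn hM
    rw [intervalIntegral.integral_of_le zero_le_one,
      intervalIntegral.integral_of_le zero_le_one,
      intervalIntegral.integral_of_le zero_le_one]
    exact MeasureTheory.integral_mul_le_Lp_mul_Lq_of_nonneg hpq'
      ((ae_restrict_mem measurableSet_Ioc).mono hnn)
      ((ae_restrict_mem measurableSet_Ioc).mono fun s _ => abs_nonneg _)
      hM hMφ
  -- |T1| and |T2| in terms of weighted integrals
  have hT1w : |T1| ≤ K * ∫ s in (0:ℝ)..1, w1 s * |f' (ψ s)| := by
    rw [hT1def]
    calc |∫ s in (0:ℝ)..1, s^α * Φ' s| ≤ ∫ s in (0:ℝ)..1, |s^α * Φ' s| :=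
        intervalIntegral.abs_integral_le_integral_abs zero_le_one
    _ = ∫ s in (0:ℝ)..1, K * (w1 s * |f' (ψ s)|) := by
        apply intervalIntegral.integral_congr
        intro s hs
        beta_reduce
        rw [uIcc_of_le zero_le_one] at hs
        have h3 : 0 < d s := hdpos s hs
        have h5 : 0 ≤ s^α := Real.rpow_nonneg hs.1 _
        have e1 : Φ' s = f' (ψ s) * (-K / (d s)^2) := rfl
        rw [e1, abs_mul, abs_of_nonneg h5, abs_mul, abs_div, abs_neg,
          abs_of_nonneg hK0.le, abs_of_nonneg (by positivity : (0:ℝ) ≤ (d s)^2)]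
        show s^α * (|f' (ψ s)| * (K / (d s)^2)) = K * (s^α * (((d s)^2)⁻¹) * |f' (ψ s)|)
        field_simp
    _ = K * ∫ s in (0:ℝ)..1, w1 s * |f' (ψ s)| := intervalIntegral.integral_const_mul _ _
  have hT2w : |T2| ≤ K * ∫ s in (0:ℝ)..1, w2 s * |f' (ψ s)| := by
    rw [hT2def]
    calc |∫ s in (0:ℝ)..1, (1-s)^α * Φ' s| ≤ ∫ s in (0:ℝ)..1, |(1-s)^α * Φ' s| :=
        intervalIntegral.abs_integral_le_integral_abs zero_le_one
    _ = ∫ s in (0:ℝ)..1, K * (w2 s * |f' (ψ s)|) := by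
        apply intervalIntegral.integral_congr
        intro s hs
        beta_reduce
        rw [uIcc_of_le zero_le_one] at hs
        have h3 : 0 < d s := hdpos s hs
        have h5 : 0 ≤ (1-s)^α := Real.rpow_nonneg (by linarith [hs.2]) _
        have e1 : Φ' s = f' (ψ s) * (-K / (d s)^2) := rfl
        rw [e1, abs_mul, abs_of_nonneg h5, abs_mul, abs_div, abs_neg,
          abs_of_nonneg hK0.le, abs_of_nonneg (by positivity : (0:ℝ) ≤ (d s)^2)]
        show (1-s)^α * (|f' (ψ s)| * (K / (d s)^2)) = K * ((1-s)^α * (((d s)^2)⁻¹) * |f' (ψ s)|)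
        field_simp
    _ = K * ∫ s in (0:ℝ)..1, w2 s * |f' (ψ s)| := intervalIntegral.integral_const_mul _ _
  -- F21 evaluation of weight integrals
  have hzval : ∀ s : ℝ, 1 - z*(1-s) = d s / b := by
    intro s; simp only [hzdef, hd]; field_simp; ring
  have hr : 0 < α*p := by positivity
  have hαp2 : α*p + 2 = (α*p) + 2 := rfl
  have hb2p : (0:ℝ) < b^(2*p) := Real.rpow_pos_of_pos hb0 _
  have hwpcommon : ∀ s ∈ Icc (0:ℝ) 1, ∀ u : ℝ, 0 ≤ u →
      (u^α * (((d s)^2)⁻¹))^p = u^(α*p) * ((d s)^(2*p))⁻¹ := by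
    intro s hs u hu
    have h3 : 0 < d s := hdpos s hs
    rw [Real.mul_rpow (Real.rpow_nonneg hu _) (by positivity),
      ← Real.rpow_mul hu, Real.inv_rpow (by positivity : (0:ℝ) ≤ (d s)^2),
      ← Real.rpow_natCast (d s) 2, ← Real.rpow_mul h3.le]
    norm_num
  have hdivpow : ∀ s ∈ Icc (0:ℝ) 1, (d s / b)^(-(2*p)) = b^(2*p) * ((d s)^(2*p))⁻¹ := by
    intro s hs
    have h3 : 0 < d s := hdpos s hs
    rw [Real.rpow_neg (by positivity), Real.div_rpow h3.le hb0.le, inv_div]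
    ring
  have hF1 : F21 (2*p) 1 (α*p+2) z
      = (α*p+1) * (b^(2*p) * ∫ s in (0:ℝ)..1, (w1 s)^p) := by
    rw [show α*p+2 = (α*p)+2 by ring, F21_eval2 hr z]
    congr 1
    rw [← aux_reflect (fun s => (1-s)^(α*p) * (1 - z*s)^(-(2*p))),
      ← intervalIntegral.integral_const_mul]
    apply intervalIntegral.integral_congr
    intro s hs
    beta_reduce
    rw [uIcc_of_le zero_le_one] at hs
    rw [show (1:ℝ) - (1-s) = s by ring, hzval s, hdivpow s hs,
      show w1 s = s^α * (((d s)^2)⁻¹) from rfl, hwpcommon s hs s hs.1]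
    ring
  have hF2 : F21 (2*p) (α*p+1) (α*p+2) z
      = (α*p+1) * (b^(2*p) * ∫ s in (0:ℝ)..1, (w2 s)^p) := by
    rw [show α*p+2 = (α*p)+2 by ring, show α*p+1 = (α*p)+1 by ring, F21_eval1 hr z]
    congr 1
    rw [← aux_reflect (fun s => s^(α*p) * (1 - z*s)^(-(2*p))),
      ← intervalIntegral.integral_const_mul]
    apply intervalIntegral.integral_congr
    intro s hs
    beta_reduce
    rw [uIcc_of_le zero_le_one] at hs
    rw [hzval s, hdivpow s hs,
      show w2 s = (1-s)^α * (((d s)^2)⁻¹) from rfl, hwpcommon s hs (1-s) (by linarith [hs.2])]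
    ring
  have hw1pnn : 0 ≤ ∫ s in (0:ℝ)..1, (w1 s)^p :=
    intervalIntegral.integral_nonneg zero_le_one (fun s hs =>
      Real.rpow_nonneg (mul_nonneg (Real.rpow_nonneg hs.1 _) (by positivity)) _)
  have hw2pnn : 0 ≤ ∫ s in (0:ℝ)..1, (w2 s)^p :=
    intervalIntegral.integral_nonneg zero_le_one (fun s hs =>
      Real.rpow_nonneg (mul_nonneg (Real.rpow_nonneg (by linarith [hs.2]) _) (by positivity)) _)
  have hF1nn : 0 ≤ F21 (2*p) 1 (α*p+2) z := by
    rw [hF1]; exact mul_nonneg (by positivity) (mul_nonneg hb2p.le hw1pnn)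
  have hF2nn : 0 ≤ F21 (2*p) (α*p+1) (α*p+2) z := by
    rw [hF2]; exact mul_nonneg (by positivity) (mul_nonneg hb2p.le hw2pnn)
  have hαp1 : (0:ℝ) < α*p+1 := by positivity
  have hbpinv : ((b^(2*p))⁻¹)^(1/p) = (b^2)⁻¹ := by
    rw [Real.inv_rpow hb2p.le, ← Real.rpow_mul hb0.le,
      show (2*p)*(1/p) = 2 by field_simp,
      show (2:ℝ) = ((2:ℕ):ℝ) by norm_num, Real.rpow_natCast]
  have hrpowW : ∀ (F : ℝ) (W : ℝ), 0 ≤ F → 0 ≤ W →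
      F = (α*p+1) * (b^(2*p) * W) →
      W^(1/p) = F^(1/p) * (1/(α*p+1))^(1/p) * (b^2)⁻¹ := by
    intro F W hFnn hWnn hFW
    have hWeq : W = F * (1/(α*p+1)) * ((b^(2*p))⁻¹) := by
      rw [hFW]; field_simp
    rw [hWeq, Real.mul_rpow (mul_nonneg hFnn (by positivity)) (by positivity),
      Real.mul_rpow hFnn (by positivity), hbpinv]
  have hrw1 : (∫ s in (0:ℝ)..1, (w1 s)^p)^(1/p)
      = (F21 (2*p) 1 (α*p+2) z)^(1/p) * (1/(α*p+1))^(1/p) * (b^2)⁻¹ :=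
    hrpowW _ _ hF1nn hw1pnn hF1
  have hrw2 : (∫ s in (0:ℝ)..1, (w2 s)^p)^(1/p)
      = (F21 (2*p) (α*p+1) (α*p+2) z)^(1/p) * (1/(α*p+1))^(1/p) * (b^2)⁻¹ :=
    hrpowW _ _ hF2nn hw2pnn hF2
  -- put the pieces together
  set MqR : ℝ := ((|f' b|^q + |f' a|^q)/2)^(1/q) with hMqRdef
  have hMqRnn : 0 ≤ MqR := Real.rpow_nonneg (by positivity) _
  have hφqR : (∫ s in (0:ℝ)..1, |f' (ψ s)|^q)^(1/q) ≤ MqR :=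
    Real.rpow_le_rpow hφqnn hqleI (by positivity)
  set F1R : ℝ := (F21 (2*p) 1 (α*p+2) z)^(1/p) with hF1Rdef
  set F2R : ℝ := (F21 (2*p) (α*p+1) (α*p+2) z)^(1/p) with hF2Rdef
  have hF1Rnn : 0 ≤ F1R := Real.rpow_nonneg hF1nn _
  have hF2Rnn : 0 ≤ F2R := Real.rpow_nonneg hF2nn _
  set CF : ℝ := (1/(α*p+1))^(1/p) with hCFdef
  have hCFnn : 0 ≤ CF := Real.rpow_nonneg (by positivity) _
  have hbound1 : |T1| ≤ K * (F1R * CF * (b^2)⁻¹ * MqR) := by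
    refine le_trans hT1w (mul_le_mul_of_nonneg_left ?_ hK0.le)
    calc (∫ s in (0:ℝ)..1, w1 s * |f' (ψ s)|)
        ≤ (∫ s in (0:ℝ)..1, (w1 s)^p)^(1/p) * (∫ s in (0:ℝ)..1, |f' (ψ s)|^q)^(1/q) :=
          hHold w1 hw1nn hMw1
    _ ≤ (∫ s in (0:ℝ)..1, (w1 s)^p)^(1/p) * MqR := by
          apply mul_le_mul_of_nonneg_left hφqR (Real.rpow_nonneg hw1pnn _)
    _ = F1R * CF * (b^2)⁻¹ * MqR := by rw [hrw1]
  have hbound2 : |T2| ≤ K * (F2R * CF * (b^2)⁻¹ * MqR) := by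
    refine le_trans hT2w (mul_le_mul_of_nonneg_left ?_ hK0.le)
    calc (∫ s in (0:ℝ)..1, w2 s * |f' (ψ s)|)
        ≤ (∫ s in (0:ℝ)..1, (w2 s)^p)^(1/p) * (∫ s in (0:ℝ)..1, |f' (ψ s)|^q)^(1/q) :=
          hHold w2 hw2nn hMw2
    _ ≤ (∫ s in (0:ℝ)..1, (w2 s)^p)^(1/p) * MqR := by
          apply mul_le_mul_of_nonneg_left hφqR (Real.rpow_nonneg hw2pnn _)
    _ = F2R * CF * (b^2)⁻¹ * MqR := by rw [hrw2]
  have habs2 : |T1 - T2| ≤ |T1| + |T2| := by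
    calc |T1 - T2| = |T1 + -T2| := by ring_nf
    _ ≤ |T1| + |-T2| := abs_add_le _ _
    _ = |T1| + |T2| := by rw [abs_neg]
  calc |(T1 - T2)/2| = |T1 - T2|/2 := by rw [abs_div, abs_two]
  _ ≤ (|T1| + |T2|)/2 := by linarith
  _ ≤ (K * (F1R * CF * (b^2)⁻¹ * MqR) + K * (F2R * CF * (b^2)⁻¹ * MqR))/2 := by
      linarith [hbound1, hbound2]
  _ = a * (b - a) / (2 * b) * CF * MqR * (F1R + F2R) := by
      rw [hKdef]; field_simp
end

section
/- Let f : I ⊆ (0,∞) → ℝ be differentiable, a, b ∈ I° with a < b, f' ∈ L¹[a,b], q > 1 with 1/p + 1/q = 1, 0 < α ≤ 1, and |f'|^q harmonically convex on [a,b]. Then |I_f(g;α,a,b)| ≤ (a(b−a)/(2b)) (1/(αp+1))^{1/p} · ((₂F₁(2q,2;3;1−a/b)|f'(b)|^q + ₂F₁(2q,1;3;1−a/b)|f'(a)|^q)/2)^{1/q}. -/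
open MeasureTheory intervalIntegral Set
open scoped NNReal

namespace HK

lemma myIntegrable_of_bound {f g : ℝ → ℝ} {C : ℝ} (hg : Measurable g)
    (heq : ∀ x ∈ Set.Ioc (0:ℝ) 1, f x = g x) (hbd : ∀ x ∈ Set.Ioc (0:ℝ) 1, |f x| ≤ C) :
    IntervalIntegrable f MeasureTheory.volume 0 1 := by
  rw [intervalIntegrable_iff_integrableOn_Ioc_of_le zero_le_one]
  have hae : f =ᵐ[volume.restrict (Set.Ioc (0:ℝ) 1)] g := by
    filter_upwards [ae_restrict_mem measurableSet_Ioc] with x hx using heq x hx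
  refine Integrable.mono' (g := fun _ => C) ?_ (hg.aestronglyMeasurable.congr hae.symm) ?_
  · exact integrableOn_const measure_Ioc_lt_top.ne
  · filter_upwards [ae_restrict_mem measurableSet_Ioc] with x hx
    simpa [Real.norm_eq_abs] using hbd x hx

lemma rpow_subadd {x y α : ℝ} (hx : 0 ≤ x) (hy : 0 ≤ y) (h0 : 0 ≤ α) (h1 : α ≤ 1) :
    (x + y) ^ α ≤ x ^ α + y ^ α := by
  have h := NNReal.rpow_add_le_add_rpow x.toNNReal y.toNNReal h0 h1
  have h2 : ((x.toNNReal + y.toNNReal : ℝ≥0) : ℝ) = x + y := by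
    simp [Real.coe_toNNReal, hx, hy]
  calc (x + y) ^ α = (((x.toNNReal + y.toNNReal : ℝ≥0) : ℝ)) ^ α := by rw [h2]
    _ = (((x.toNNReal + y.toNNReal : ℝ≥0) ^ α : ℝ≥0) : ℝ) := by rw [NNReal.coe_rpow]
    _ ≤ ((x.toNNReal ^ α + y.toNNReal ^ α : ℝ≥0) : ℝ) := by exact_mod_cast h
    _ = x ^ α + y ^ α := by
        push_cast [NNReal.coe_rpow]
        simp [Real.coe_toNNReal, hx, hy]

lemma abs_rpow_diff_le {α : ℝ} (hα0 : 0 < α) (hα1 : α ≤ 1) {u : ℝ} (hu : u ∈ Set.Icc (0:ℝ) 1) :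
    |(1-u)^α - u^α| ≤ |1-2*u|^α := by
  obtain ⟨h0, h1⟩ := hu
  rcases le_total u (1/2) with h | h
  · have habs : |1-2*u| = 1-2*u := abs_of_nonneg (by linarith)
    have hmono : u ^ α ≤ (1-u) ^ α := Real.rpow_le_rpow h0 (by linarith) hα0.le
    rw [habs, abs_of_nonneg (by linarith)]
    have : (1-u) ^ α ≤ (1-2*u) ^ α + u ^ α := by
      have := rpow_subadd (x := 1-2*u) (y := u) (by linarith) h0 hα0.le hα1
      simpa [show 1-2*u+u = 1-u by ring] using this
    linarith
  · have habs : |1-2*u| = 2*u-1 := by rw [abs_of_nonpos (by linarith)]; ring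
    have hmono : (1-u) ^ α ≤ u ^ α := Real.rpow_le_rpow (by linarith) (by linarith) hα0.le
    rw [habs, abs_of_nonpos (by linarith)]
    have : u ^ α ≤ (2*u-1) ^ α + (1-u) ^ α := by
      have := rpow_subadd (x := 2*u-1) (y := 1-u) (by linarith) (by linarith) hα0.le hα1
      simpa [show 2*u-1+(1-u) = u by ring] using this
    linarith

noncomputable def A (a b u : ℝ) : ℝ := u * (b - a) + a

noncomputable def phi (a b u : ℝ) : ℝ := a * b / A a b u

noncomputable def Fd (f' : ℝ → ℝ) (a b u : ℝ) : ℝ :=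
  f' (phi a b u) * (-(a*b*(b-a)) / (A a b u)^2)

variable {a b : ℝ}

lemma A_mem (ha : 0 < a) (hab : a < b) {u : ℝ} (hu : u ∈ Set.Icc (0:ℝ) 1) :
    A a b u ∈ Set.Icc a b := by
  obtain ⟨h0, h1⟩ := hu
  simp only [A]
  constructor <;> nlinarith [sub_pos.2 hab]

lemma A_pos (ha : 0 < a) (hab : a < b) {u : ℝ} (hu : u ∈ Set.Icc (0:ℝ) 1) :
    0 < A a b u := lt_of_lt_of_le ha (A_mem ha hab hu).1

lemma phi_mem (ha : 0 < a) (hab : a < b) {u : ℝ} (hu : u ∈ Set.Icc (0:ℝ) 1) :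
    phi a b u ∈ Set.Icc a b := by
  have hA := A_mem ha hab hu
  have hApos := A_pos ha hab hu
  have hb : 0 < b := ha.trans hab
  constructor
  · rw [phi, le_div_iff₀ hApos]; nlinarith [hA.2]
  · rw [phi, div_le_iff₀ hApos]; nlinarith [hA.1]

lemma measurable_A : Measurable (A a b) :=
  (measurable_id.mul_const (b-a)).add_const a

lemma measurable_phi : Measurable (phi a b) :=
  measurable_const.div measurable_A

lemma hasDerivAt_phi {u : ℝ} (hAne : A a b u ≠ 0) :
    HasDerivAt (phi a b) (-(a*b*(b-a)) / (A a b u)^2) u := by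
  have hA : HasDerivAt (A a b) (b - a) u := by
    have := ((hasDerivAt_id u).mul_const (b-a)).add_const a
    rw [one_mul] at this
    exact this
  have h := (hasDerivAt_const u (a*b)).div hA hAne
  exact h.congr_deriv (by ring)

lemma hasDerivAt_Fm {f f' : ℝ → ℝ} (ha : 0 < a) (hab : a < b) {u : ℝ}
    (hu : u ∈ Set.Icc (0:ℝ) 1) (hd : HasDerivAt f (f' (phi a b u)) (phi a b u)) :
    HasDerivAt (fun v => f (phi a b v)) (Fd f' a b u) u := by
  have h1 := hasDerivAt_phi (a := a) (b := b) (A_pos ha hab hu).ne'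
  exact hd.comp u h1

-- substitution lemmas
lemma subst1 (f : ℝ → ℝ) (ha : 0 < a) (hab : a < b) (α : ℝ) :
    ∫ t in (1/b)..(1/a), (t - 1/b)^(α-1) * f (1/t) =
      ((b-a)/(a*b))^α * ∫ u in (0:ℝ)..1, u^(α-1) * f (phi a b u) := by
  have hb : 0 < b := ha.trans hab
  set c : ℝ := (b-a)/(a*b) with hc
  have hc0 : 0 < c := div_pos (sub_pos.2 hab) (mul_pos ha hb)
  have key := intervalIntegral.integral_comp_mul_add
    (a := (0:ℝ)) (b := 1) (f := fun t => (t - 1/b)^(α-1) * f (1/t)) hc0.ne' (1/b)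
  have e0 : c * 0 + 1/b = 1/b := by ring
  have e1 : c * 1 + 1/b = 1/a := by rw [hc]; field_simp; ring
  rw [e0, e1] at key
  have congr1 : ∀ u ∈ Set.uIcc (0:ℝ) 1,
      (c * u + 1/b - 1/b)^(α-1) * f (1/(c * u + 1/b))
        = c^(α-1) * (u^(α-1) * f (phi a b u)) := by
    intro u hu
    rw [Set.uIcc_of_le zero_le_one] at hu
    have h1 : c * u + 1/b - 1/b = c * u := by ring
    have h2 : 1/(c * u + 1/b) = phi a b u := by
      have hden : (b-a)/(a*b)*u + 1/b = (u*(b-a)+a)/(a*b) := by field_simp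
      rw [phi, A, hc, hden, one_div_div]
    rw [h1, h2, Real.mul_rpow hc0.le hu.1]
    ring
  calc ∫ t in (1/b)..(1/a), (t - 1/b)^(α-1) * f (1/t)
      = c • ∫ u in (0:ℝ)..1, (c * u + 1/b - 1/b)^(α-1) * f (1/(c * u + 1/b)) := by
        rw [key, smul_smul, mul_inv_cancel₀ hc0.ne', one_smul]
    _ = c * ∫ u in (0:ℝ)..1, c^(α-1) * (u^(α-1) * f (phi a b u)) := by
        rw [intervalIntegral.integral_congr congr1]; simp [smul_eq_mul]
    _ = c^α * ∫ u in (0:ℝ)..1, u^(α-1) * f (phi a b u) := by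
        rw [intervalIntegral.integral_const_mul, ← mul_assoc]
        congr 1
        rw [show α = 1 + (α - 1) by ring, Real.rpow_add hc0, Real.rpow_one]
        ring_nf

lemma subst2 (f : ℝ → ℝ) (ha : 0 < a) (hab : a < b) (α : ℝ) :
    ∫ t in (1/b)..(1/a), (1/a - t)^(α-1) * f (1/t) =
      ((b-a)/(a*b))^α * ∫ u in (0:ℝ)..1, (1-u)^(α-1) * f (phi a b u) := by
  have hb : 0 < b := ha.trans hab
  set c : ℝ := (b-a)/(a*b) with hc
  have hc0 : 0 < c := div_pos (sub_pos.2 hab) (mul_pos ha hb)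
  have key := intervalIntegral.integral_comp_mul_add
    (a := (0:ℝ)) (b := 1) (f := fun t => (1/a - t)^(α-1) * f (1/t)) hc0.ne' (1/b)
  have e0 : c * 0 + 1/b = 1/b := by ring
  have e1 : c * 1 + 1/b = 1/a := by rw [hc]; field_simp; ring
  rw [e0, e1] at key
  have congr1 : ∀ u ∈ Set.uIcc (0:ℝ) 1,
      (1/a - (c * u + 1/b))^(α-1) * f (1/(c * u + 1/b))
        = c^(α-1) * ((1-u)^(α-1) * f (phi a b u)) := by
    intro u hu
    rw [Set.uIcc_of_le zero_le_one] at hu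
    have h1 : 1/a - (c * u + 1/b) = c * (1 - u) := by
      rw [hc]; field_simp; ring
    have h2 : 1/(c * u + 1/b) = phi a b u := by
      have hden : (b-a)/(a*b)*u + 1/b = (u*(b-a)+a)/(a*b) := by field_simp
      rw [phi, A, hc, hden, one_div_div]
    rw [h1, h2, Real.mul_rpow hc0.le (by linarith [hu.2] : (0:ℝ) ≤ 1 - u)]
    ring
  calc ∫ t in (1/b)..(1/a), (1/a - t)^(α-1) * f (1/t)
      = c • ∫ u in (0:ℝ)..1, (1/a - (c * u + 1/b))^(α-1) * f (1/(c * u + 1/b)) := by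
        rw [key, smul_smul, mul_inv_cancel₀ hc0.ne', one_smul]
    _ = c * ∫ u in (0:ℝ)..1, c^(α-1) * ((1-u)^(α-1) * f (phi a b u)) := by
        rw [intervalIntegral.integral_congr congr1]; simp [smul_eq_mul]
    _ = c^α * ∫ u in (0:ℝ)..1, (1-u)^(α-1) * f (phi a b u) := by
        rw [intervalIntegral.integral_const_mul, ← mul_assoc]
        congr 1
        rw [show α = 1 + (α - 1) by ring, Real.rpow_add hc0, Real.rpow_one]
        ring_nf

-- moment integral
lemma cont_abspow {r : ℝ} (hr : 0 < r) : Continuous fun u : ℝ => |1-2*u| ^ r := by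
  rw [continuous_iff_continuousAt]
  intro x
  exact (Real.continuousAt_rpow_const _ r (Or.inr hr.le)).comp
    ((continuous_const.sub (continuous_const.mul continuous_id)).abs.continuousAt)

lemma int_abs_pow {r : ℝ} (hr : 0 < r) :
    ∫ u in (0:ℝ)..1, |1-2*u| ^ r = 1/(r+1) := by
  have hcont := cont_abspow hr
  have hsplit := intervalIntegral.integral_add_adjacent_intervals
    (a := (0:ℝ)) (b := 1/2) (c := 1) (f := fun u => |1-2*u| ^ r)
    (hcont.intervalIntegrable (μ := volume) _ _) (hcont.intervalIntegrable (μ := volume) _ _)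
  have hbase : ∫ x in (0:ℝ)..1, x ^ r = 1/(r+1) := by
    rw [integral_rpow (Or.inl (by linarith))]
    rw [Real.one_rpow, Real.zero_rpow (by linarith : r + 1 ≠ 0)]
    norm_num
  have h1 : ∫ u in (0:ℝ)..(1/2), |1-2*u| ^ r = (1/2) * (1/(r+1)) := by
    have hc : ∀ u ∈ Set.uIcc (0:ℝ) (1/2), |1-2*u| ^ r = ((-2) * u + 1) ^ r := by
      intro u hu
      rw [Set.uIcc_of_le (by norm_num)] at hu
      rw [abs_of_nonneg (by linarith [hu.1, hu.2] : (0:ℝ) ≤ 1 - 2*u)]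
      ring_nf
    rw [intervalIntegral.integral_congr hc]
    have key := intervalIntegral.integral_comp_mul_add
      (a := (0:ℝ)) (b := 1/2) (f := fun x => x ^ r) (c := (-2:ℝ)) (by norm_num) 1
    rw [show (-2:ℝ) * 0 + 1 = 1 by norm_num, show (-2:ℝ) * (1/2) + 1 = 0 by norm_num] at key
    rw [key, intervalIntegral.integral_symm, hbase]
    simp
  have h2 : ∫ u in (1/2:ℝ)..1, |1-2*u| ^ r = (1/2) * (1/(r+1)) := by
    have hc : ∀ u ∈ Set.uIcc (1/2:ℝ) 1, |1-2*u| ^ r = (2 * u + (-1)) ^ r := by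
      intro u hu
      rw [Set.uIcc_of_le (by norm_num)] at hu
      rw [abs_of_nonpos (by linarith [hu.1] : 1 - 2*u ≤ 0)]
      ring_nf
    rw [intervalIntegral.integral_congr hc]
    have key := intervalIntegral.integral_comp_mul_add
      (a := (1/2:ℝ)) (b := 1) (f := fun x => x ^ r) (c := (2:ℝ)) (by norm_num) (-1)
    rw [show (2:ℝ) * (1/2) + (-1) = 0 by norm_num, show (2:ℝ) * 1 + (-1) = 1 by norm_num] at key
    rw [key, hbase]
    simp
  rw [← hsplit, h1, h2]
  ring

-- F21 evaluations
lemma Gamma_three : Real.Gamma 3 = 2 := by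
  rw [show (3:ℝ) = 2 + 1 by norm_num, Real.Gamma_add_one two_ne_zero, Real.Gamma_two, mul_one]

lemma one_sub_zs (ha : 0 < a) (hab : a < b) (s : ℝ) :
    1 - (1 - a/b) * s = A a b (1-s) / b := by
  have hb : (0:ℝ) < b := ha.trans hab
  rw [A]; field_simp; ring

lemma zs_rpow (ha : 0 < a) (hab : a < b) {s : ℝ} (hs : s ∈ Set.Icc (0:ℝ) 1) (r : ℝ) :
    (1 - (1 - a/b) * s) ^ (-r) = b ^ r * (A a b (1-s)) ^ (-r) := by
  have hb : (0:ℝ) < b := ha.trans hab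
  have hA : 0 < A a b (1-s) := A_pos ha hab ⟨by linarith [hs.2], by linarith [hs.1]⟩
  rw [one_sub_zs ha hab, Real.div_rpow hA.le hb.le, Real.rpow_neg hb.le,
    div_eq_mul_inv, inv_inv, mul_comm]

lemma F21_two (ha : 0 < a) (hab : a < b) (r : ℝ) :
    F21 r 2 3 (1 - a/b) = 2 * (b ^ r * ∫ u in (0:ℝ)..1, (1-u) * (A a b u) ^ (-r)) := by
  rw [F21, Real.Gamma_two, show (3:ℝ) - 2 = 1 by norm_num, Real.Gamma_one, Gamma_three]
  have hc : ∀ s ∈ Set.uIcc (0:ℝ) 1,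
      s ^ ((2:ℝ) - 1) * (1 - s) ^ ((1:ℝ) - 1) * (1 - (1 - a/b) * s) ^ (-r)
        = b ^ r * ((fun v => (1 - v) * (A a b v) ^ (-r)) (1 - s)) := by
    intro s hs
    rw [Set.uIcc_of_le zero_le_one] at hs
    rw [show (2:ℝ) - 1 = 1 by norm_num, show (1:ℝ) - 1 = 0 by norm_num,
      Real.rpow_one, Real.rpow_zero, zs_rpow ha hab hs r]
    simp only [sub_sub_cancel]
    ring
  rw [intervalIntegral.integral_congr hc, intervalIntegral.integral_const_mul,
    intervalIntegral.integral_comp_sub_left (fun v => (1 - v) * (A a b v) ^ (-r)) 1]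
  norm_num

lemma F21_one (ha : 0 < a) (hab : a < b) (r : ℝ) :
    F21 r 1 3 (1 - a/b) = 2 * (b ^ r * ∫ u in (0:ℝ)..1, u * (A a b u) ^ (-r)) := by
  rw [F21, Real.Gamma_one, show (3:ℝ) - 1 = 2 by norm_num, Real.Gamma_two, Gamma_three]
  have hc : ∀ s ∈ Set.uIcc (0:ℝ) 1,
      s ^ ((1:ℝ) - 1) * (1 - s) ^ ((2:ℝ) - 1) * (1 - (1 - a/b) * s) ^ (-r)
        = b ^ r * ((fun v => v * (A a b v) ^ (-r)) (1 - s)) := by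
    intro s hs
    rw [Set.uIcc_of_le zero_le_one] at hs
    rw [show (1:ℝ) - 1 = 0 by norm_num, show (2:ℝ) - 1 = 1 by norm_num,
      Real.rpow_one, Real.rpow_zero, zs_rpow ha hab hs r]
    ring
  rw [intervalIntegral.integral_congr hc, intervalIntegral.integral_const_mul,
    intervalIntegral.integral_comp_sub_left (fun v => v * (A a b v) ^ (-r)) 1]
  norm_num

-- Hölder on [0,1]
lemma holder01 {φ ψ : ℝ → ℝ} {p q : ℝ} (hpq : Real.HolderConjugate p q)
    (hφm : AEStronglyMeasurable φ (volume.restrict (Set.Ioc (0:ℝ) 1)))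
    (hψm : AEStronglyMeasurable ψ (volume.restrict (Set.Ioc (0:ℝ) 1)))
    (hφ0 : ∀ x ∈ Set.Ioc (0:ℝ) 1, 0 ≤ φ x) (hψ0 : ∀ x ∈ Set.Ioc (0:ℝ) 1, 0 ≤ ψ x)
    {Cφ Cψ : ℝ} (hbφ : ∀ x ∈ Set.Ioc (0:ℝ) 1, ‖φ x‖ ≤ Cφ)
    (hbψ : ∀ x ∈ Set.Ioc (0:ℝ) 1, ‖ψ x‖ ≤ Cψ) :
    ∫ u in (0:ℝ)..1, φ u * ψ u ≤
      (∫ u in (0:ℝ)..1, φ u ^ p) ^ (1/p) * (∫ u in (0:ℝ)..1, ψ u ^ q) ^ (1/q) := by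
  haveI : IsFiniteMeasure (volume.restrict (Set.Ioc (0:ℝ) 1)) :=
    ⟨by rw [Measure.restrict_apply_univ]; exact measure_Ioc_lt_top⟩
  rw [intervalIntegral.integral_of_le zero_le_one,
    intervalIntegral.integral_of_le zero_le_one,
    intervalIntegral.integral_of_le zero_le_one]
  refine MeasureTheory.integral_mul_le_Lp_mul_Lq_of_nonneg hpq ?_ ?_ ?_ ?_
  · filter_upwards [ae_restrict_mem measurableSet_Ioc] with x hx using hφ0 x hx
  · filter_upwards [ae_restrict_mem measurableSet_Ioc] with x hx using hψ0 x hx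
  · exact MemLp.of_bound hφm Cφ
      (by filter_upwards [ae_restrict_mem measurableSet_Ioc] with x hx using hbφ x hx)
  · exact MemLp.of_bound hψm Cψ
      (by filter_upwards [ae_restrict_mem measurableSet_Ioc] with x hx using hbψ x hx)

-- IBP
lemma IBP1 {F F' : ℝ → ℝ} {α : ℝ} (hα0 : 0 < α)
    (hF : ∀ u ∈ Set.Icc (0:ℝ) 1, HasDerivAt F (F' u) u)
    (hi : IntervalIntegrable (fun u => u^α * F' u) MeasureTheory.volume 0 1) :
    ∫ u in (0:ℝ)..1, α * u^(α-1) * F u = F 1 - ∫ u in (0:ℝ)..1, u^α * F' u := by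
  have hFc : ContinuousOn F (Set.Icc (0:ℝ) 1) :=
    fun u hu => (hF u hu).continuousAt.continuousWithinAt
  have hGc : ContinuousOn (fun u => u^α * F u) (Set.Icc (0:ℝ) 1) := by
    refine ContinuousOn.mul ?_ hFc
    exact fun x _ => (Real.continuousAt_rpow_const x α (Or.inr hα0.le)).continuousWithinAt
  have hGd : ∀ x ∈ Set.Ioo (0:ℝ) 1, HasDerivWithinAt (fun u => u^α * F u)
      ((fun u => α * u^(α-1) * F u + u^α * F' u) x) (Set.Ioi x) x := by
    intro x hx
    have h1 : HasDerivAt (fun u : ℝ => u^α) (α * x^(α-1)) x :=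
      Real.hasDerivAt_rpow_const (Or.inl hx.1.ne')
    exact ((h1.mul (hF x ⟨hx.1.le, hx.2.le⟩))).hasDerivWithinAt
  have hint1 : IntervalIntegrable (fun u => α * u^(α-1) * F u) MeasureTheory.volume 0 1 := by
    have h0 : IntervalIntegrable (fun u : ℝ => α * u^(α-1)) MeasureTheory.volume 0 1 :=
      (intervalIntegrable_rpow' (by linarith)).const_mul α
    exact h0.mul_continuousOn (g := F) (by rw [Set.uIcc_of_le zero_le_one]; exact hFc)
  have key := intervalIntegral.integral_eq_sub_of_hasDeriv_right_of_le zero_le_one hGc hGd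
    (hint1.add hi)
  rw [intervalIntegral.integral_add hint1 hi] at key
  rw [Real.one_rpow, Real.zero_rpow hα0.ne', one_mul, zero_mul] at key
  linarith

lemma IBP2 {F F' : ℝ → ℝ} {α : ℝ} (hα0 : 0 < α)
    (hF : ∀ u ∈ Set.Icc (0:ℝ) 1, HasDerivAt F (F' u) u)
    (hi : IntervalIntegrable (fun u => (1-u)^α * F' u) MeasureTheory.volume 0 1) :
    ∫ u in (0:ℝ)..1, α * (1-u)^(α-1) * F u = F 0 + ∫ u in (0:ℝ)..1, (1-u)^α * F' u := by
  have hFc : ContinuousOn F (Set.Icc (0:ℝ) 1) :=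
    fun u hu => (hF u hu).continuousAt.continuousWithinAt
  have hkc : ContinuousOn (fun u : ℝ => (1-u)^α) (Set.Icc (0:ℝ) 1) := by
    intro x _
    exact ((Real.continuousAt_rpow_const (1-x) α (Or.inr hα0.le)).comp
      ((continuous_const.sub continuous_id).continuousAt)).continuousWithinAt
  have hGc : ContinuousOn (fun u => -((1-u)^α * F u)) (Set.Icc (0:ℝ) 1) :=
    (hkc.mul hFc).neg
  have hGd : ∀ x ∈ Set.Ioo (0:ℝ) 1, HasDerivWithinAt (fun u => -((1-u)^α * F u))
      ((fun u => α * (1-u)^(α-1) * F u - (1-u)^α * F' u) x) (Set.Ioi x) x := by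
    intro x hx
    have h1 : HasDerivAt (fun u : ℝ => (1-u)^α) (-(α * (1-x)^(α-1))) x := by
      have h2 : HasDerivAt (fun u : ℝ => 1 - u) (-1) x := by
        exact (hasDerivAt_id x).const_sub 1
      have h3 : HasDerivAt (fun y : ℝ => y^α) (α * (1-x)^(α-1)) (1-x) :=
        Real.hasDerivAt_rpow_const (Or.inl (by simp; linarith [hx.2]))
      have := h3.comp x h2
      exact this.congr_deriv (by ring)
    have := (h1.mul (hF x ⟨hx.1.le, hx.2.le⟩)).neg
    apply HasDerivAt.hasDerivWithinAt
    exact this.congr_deriv (by beta_reduce; ring)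
  have hint1 : IntervalIntegrable (fun u => α * (1-u)^(α-1) * F u) MeasureTheory.volume 0 1 := by
    have h0 : IntervalIntegrable (fun u : ℝ => u^(α-1)) MeasureTheory.volume 0 1 :=
      intervalIntegrable_rpow' (by linarith)
    have h1 : IntervalIntegrable (fun u : ℝ => (1-u)^(α-1)) MeasureTheory.volume 0 1 := by
      simpa using (h0.comp_sub_left 1).symm
    exact (h1.const_mul α).mul_continuousOn (g := F)
      (by rw [Set.uIcc_of_le zero_le_one]; exact hFc)
  have key := intervalIntegral.integral_eq_sub_of_hasDeriv_right_of_le zero_le_one hGc hGd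
    (hint1.sub hi)
  rw [intervalIntegral.integral_sub hint1 hi] at key
  rw [show (1:ℝ) - 1 = 0 by norm_num, show (1:ℝ) - 0 = 1 by norm_num] at key
  rw [Real.one_rpow, Real.zero_rpow hα0.ne', one_mul, zero_mul] at key
  linarith

end HK

set_option maxHeartbeats 2000000 in
theorem stmt_18 (I : Set ℝ) (hI : I.OrdConnected) (hIpos : I ⊆ Set.Ioi (0:ℝ))
    (f f' : ℝ → ℝ) (hdiff : ∀ x ∈ interior I, HasDerivAt f (f' x) x)
    (a b : ℝ) (ha : a ∈ interior I) (hb : b ∈ interior I) (hab : a < b)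
    (hint : IntervalIntegrable f' MeasureTheory.volume a b)
    (p q : ℝ) (hq : 1 < q) (hpq : 1/p + 1/q = 1)
    (α : ℝ) (hα0 : 0 < α) (hα1 : α ≤ 1)
    (hconv : ∀ x ∈ Set.Icc a b, ∀ y ∈ Set.Icc a b, ∀ t ∈ Set.Icc (0:ℝ) 1,
      |f' (x * y / (t * x + (1 - t) * y))| ^ q ≤ t * |f' y| ^ q + (1 - t) * |f' x| ^ q)
    (g : ℝ → ℝ) (hg : g = fun x => 1 / x) :
    |(f a + f b) / 2 - (Real.Gamma (α + 1) / 2) * (a * b / (b - a)) ^ α *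
        (Jminus α (1 / a) (f ∘ g) (1 / b) + Jplus α (1 / b) (f ∘ g) (1 / a))| ≤
      (a * (b - a) / (2 * b)) * (1 / (α * p + 1)) ^ (1/p) *
        ((F21 (2*q) 2 3 (1 - a/b) * |f' b| ^ q + F21 (2*q) 1 3 (1 - a/b) * |f' a| ^ q) / 2)
          ^ (1/q) := by
  subst hg
  -- basic positivity
  have ha0 : 0 < a := hIpos (interior_subset ha)
  have hb0 : 0 < b := hIpos (interior_subset hb)
  have hba : 0 < b - a := sub_pos.2 hab
  have hq0 : 0 < q := lt_trans zero_lt_one hq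
  have hq0' : q ≠ 0 := hq0.ne'
  have hinvq : 0 < 1/q := by positivity
  have hinvq1 : 1/q < 1 := by rw [div_lt_one hq0]; exact hq
  have hip0 : 0 < 1/p := by linarith
  have hip1 : 1/p < 1 := by linarith
  have hp0 : 0 < p := one_div_pos.mp hip0
  have hp1 : 1 < p := (div_lt_one hp0).mp hip1
  have hconj : Real.HolderConjugate p q := Real.holderConjugate_iff.mpr ⟨hp1, by rw [← one_div, ← one_div]; exact hpq⟩
  have hGa : 0 < Real.Gamma α := Real.Gamma_pos_of_pos hα0
  have hsub : Set.Icc a b ⊆ interior I := hI.interior.out ha hb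
  have hphiI : ∀ u ∈ Set.Icc (0:ℝ) 1, HK.phi a b u ∈ interior I :=
    fun u hu => hsub (HK.phi_mem ha0 hab hu)
  have hApos : ∀ u ∈ Set.Icc (0:ℝ) 1, 0 < HK.A a b u := fun u hu => HK.A_pos ha0 hab hu
  -- F and its derivative
  have hFd : ∀ u ∈ Set.Icc (0:ℝ) 1,
      HasDerivAt (fun v => f (HK.phi a b v)) (HK.Fd f' a b u) u :=
    fun u hu => HK.hasDerivAt_Fm ha0 hab hu (hdiff _ (hphiI u hu))
  -- convexity bound
  have hconv' : ∀ u ∈ Set.Icc (0:ℝ) 1,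
      |f' (HK.phi a b u)|^q ≤ u * |f' a|^q + (1-u) * |f' b|^q := by
    intro u hu
    have h := hconv b ⟨hab.le, le_refl b⟩ a ⟨le_refl a, hab.le⟩ u hu
    have he : b * a / (u * b + (1 - u) * a) = HK.phi a b u := by
      rw [HK.phi, HK.A]; congr 1 <;> ring
    rwa [he] at h
  set Cf : ℝ := (|f' a|^q + |f' b|^q) ^ (1/q) with hCf_def
  have hCf0 : 0 ≤ Cf := Real.rpow_nonneg (by positivity) _
  have habs_bound : ∀ u ∈ Set.Icc (0:ℝ) 1, |f' (HK.phi a b u)| ≤ Cf := by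
    intro u hu
    have h1 : |f' (HK.phi a b u)|^q ≤ |f' a|^q + |f' b|^q := by
      have := hconv' u hu
      nlinarith [Real.rpow_nonneg (abs_nonneg (f' a)) q,
        Real.rpow_nonneg (abs_nonneg (f' b)) q, hu.1, hu.2]
    calc |f' (HK.phi a b u)| = (|f' (HK.phi a b u)|^q)^(1/q) := by
          rw [one_div, Real.rpow_rpow_inv (abs_nonneg _) hq0']
      _ ≤ Cf := Real.rpow_le_rpow (Real.rpow_nonneg (abs_nonneg _) _) h1 (by positivity)
  -- measurable comparison
  have hmeas : Measurable (fun u => deriv f (HK.phi a b u)) :=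
    (measurable_deriv f).comp HK.measurable_phi
  have hAmeas : Measurable (fun u => (HK.A a b u)^2) := HK.measurable_A.pow_const 2
  have heqIoc : ∀ u ∈ Set.Ioc (0:ℝ) 1, f' (HK.phi a b u) = deriv f (HK.phi a b u) :=
    fun u hu => ((hdiff _ (hphiI u (Set.Ioc_subset_Icc_self hu))).deriv).symm
  -- w and its properties
  set w : ℝ → ℝ := fun u => |f' (HK.phi a b u)| / (HK.A a b u)^2 with hw_def
  have hw0 : ∀ u, 0 ≤ w u := fun u => div_nonneg (abs_nonneg _) (sq_nonneg _)
  have hAa2 : ∀ u ∈ Set.Icc (0:ℝ) 1, a^2 ≤ (HK.A a b u)^2 := by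
    intro u hu
    have h1 := (HK.A_mem ha0 hab hu).1
    nlinarith [hApos u hu]
  have hwb : ∀ u ∈ Set.Icc (0:ℝ) 1, w u ≤ Cf / a^2 := by
    intro u hu
    exact div_le_div₀ hCf0 (habs_bound u hu) (by positivity) (hAa2 u hu)
  -- bound for Fd
  have hFdb : ∀ u ∈ Set.Icc (0:ℝ) 1, |HK.Fd f' a b u| ≤ Cf * (a*b*(b-a)/a^2) := by
    intro u hu
    rw [HK.Fd, abs_mul]
    have h2 : |(-(a*b*(b-a))) / (HK.A a b u)^2| = (a*b*(b-a)) / (HK.A a b u)^2 := by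
      rw [abs_div, abs_neg, abs_of_nonneg (by positivity : (0:ℝ) ≤ a*b*(b-a)),
        abs_of_nonneg (sq_nonneg _)]
    rw [h2]
    apply mul_le_mul (habs_bound u hu) _ (by positivity) hCf0
    exact div_le_div₀ (by positivity) le_rfl (by positivity) (hAa2 u hu)
  -- integrability facts
  have hi_w : IntervalIntegrable w MeasureTheory.volume 0 1 := by
    apply HK.myIntegrable_of_bound (C := Cf / a^2)
      (g := fun u => |deriv f (HK.phi a b u)| / (HK.A a b u)^2) (hmeas.abs.div hAmeas)
    · intro x hx; rw [hw_def]; simp only; rw [heqIoc x hx]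
    · intro x hx
      rw [abs_of_nonneg (hw0 x)]
      exact hwb x (Set.Ioc_subset_Icc_self hx)
  have hi1 : IntervalIntegrable (fun u => u^α * HK.Fd f' a b u) MeasureTheory.volume 0 1 := by
    apply HK.myIntegrable_of_bound (C := 1 * (Cf * (a*b*(b-a)/a^2)))
      (g := fun u => u^α * (deriv f (HK.phi a b u) * (-(a*b*(b-a)) / (HK.A a b u)^2)))
    · have h1 : Measurable fun u : ℝ => u^α := measurable_id.pow_const α
      have h2 : Measurable fun u : ℝ => (-(a*b*(b-a)) / (HK.A a b u)^2) :=
        measurable_const.div hAmeas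
      exact h1.mul (hmeas.mul h2)
    · intro x hx; rw [HK.Fd, heqIoc x hx]
    · intro x hx
      rw [abs_mul]
      apply mul_le_mul _ (hFdb x (Set.Ioc_subset_Icc_self hx)) (abs_nonneg _) zero_le_one
      rw [abs_of_nonneg (Real.rpow_nonneg hx.1.le _)]
      exact Real.rpow_le_one hx.1.le hx.2 hα0.le
  have hi2 : IntervalIntegrable (fun u => (1-u)^α * HK.Fd f' a b u) MeasureTheory.volume 0 1 := by
    apply HK.myIntegrable_of_bound (C := 1 * (Cf * (a*b*(b-a)/a^2)))
      (g := fun u => (1-u)^α * (deriv f (HK.phi a b u) * (-(a*b*(b-a)) / (HK.A a b u)^2)))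
    · have h1 : Measurable fun u : ℝ => (1-u)^α :=
        (measurable_const.sub measurable_id).pow_const α
      have h2 : Measurable fun u : ℝ => (-(a*b*(b-a)) / (HK.A a b u)^2) :=
        measurable_const.div hAmeas
      exact h1.mul (hmeas.mul h2)
    · intro x hx; rw [HK.Fd, heqIoc x hx]
    · intro x hx
      rw [abs_mul]
      apply mul_le_mul _ (hFdb x (Set.Ioc_subset_Icc_self hx)) (abs_nonneg _) zero_le_one
      rw [abs_of_nonneg (Real.rpow_nonneg (by linarith [hx.2] : (0:ℝ) ≤ 1 - x) _)]
      exact Real.rpow_le_one (by linarith [hx.2]) (by linarith [hx.1]) hα0.le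
  have habs12 : ∀ x ∈ Set.Ioc (0:ℝ) 1, |1-2*x| ≤ 1 := by
    intro x hx
    rw [abs_le]; constructor <;> [linarith [hx.2]; linarith [hx.1]]
  have hi4 : IntervalIntegrable (fun u => |1-2*u|^α * w u) MeasureTheory.volume 0 1 := by
    apply HK.myIntegrable_of_bound (C := 1 * (Cf / a^2))
      (g := fun u => |1-2*u|^α * (|deriv f (HK.phi a b u)| / (HK.A a b u)^2))
    · exact (((measurable_const.sub (measurable_id.const_mul 2)).abs.pow_const α).mul
        (hmeas.abs.div hAmeas))
    · intro x hx; rw [hw_def]; simp only; rw [heqIoc x hx]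
    · intro x hx
      rw [abs_mul]
      apply mul_le_mul _ _ (abs_nonneg _) zero_le_one
      · rw [abs_of_nonneg (Real.rpow_nonneg (abs_nonneg _) _)]
        exact Real.rpow_le_one (abs_nonneg _) (habs12 x hx) hα0.le
      · rw [abs_of_nonneg (hw0 x)]
        exact hwb x (Set.Ioc_subset_Icc_self hx)
  have hi5 : IntervalIntegrable (fun u => |(1-u)^α - u^α| * w u) MeasureTheory.volume 0 1 := by
    apply HK.myIntegrable_of_bound (C := 2 * (Cf / a^2))
      (g := fun u => |(1-u)^α - u^α| * (|deriv f (HK.phi a b u)| / (HK.A a b u)^2))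
    · exact ((((measurable_const.sub measurable_id).pow_const α).sub
        (measurable_id.pow_const α)).abs.mul (hmeas.abs.div hAmeas))
    · intro x hx; rw [hw_def]; simp only; rw [heqIoc x hx]
    · intro x hx
      rw [abs_mul]
      apply mul_le_mul _ _ (abs_nonneg _) (by norm_num)
      · rw [abs_abs]
        have e1 : (1-x)^α ≤ 1 := Real.rpow_le_one (by linarith [hx.2]) (by linarith [hx.1]) hα0.le
        have e2 : x^α ≤ 1 := Real.rpow_le_one hx.1.le hx.2 hα0.le
        have e3 : 0 ≤ (1-x)^α := Real.rpow_nonneg (by linarith [hx.2]) _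
        have e4 : 0 ≤ x^α := Real.rpow_nonneg hx.1.le _
        rw [abs_le]; constructor <;> [linarith; linarith]
      · rw [abs_of_nonneg (hw0 x)]
        exact hwb x (Set.Ioc_subset_Icc_self hx)
  have hi6 : IntervalIntegrable (fun u => w u ^ q) MeasureTheory.volume 0 1 := by
    apply HK.myIntegrable_of_bound (C := (Cf / a^2)^q)
      (g := fun u => (|deriv f (HK.phi a b u)| / (HK.A a b u)^2)^q)
    · exact (hmeas.abs.div hAmeas).pow_const q
    · intro x hx; rw [hw_def]; simp only; rw [heqIoc x hx]
    · intro x hx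
      rw [abs_of_nonneg (Real.rpow_nonneg (hw0 x) _)]
      exact Real.rpow_le_rpow (hw0 x) (hwb x (Set.Ioc_subset_Icc_self hx)) hq0.le
  -- phi endpoints
  have hphi1 : HK.phi a b 1 = a := by
    rw [HK.phi, HK.A, show (1:ℝ)*(b-a)+a = b by ring, mul_div_assoc, div_self hb0.ne', mul_one]
  have hphi0 : HK.phi a b 0 = b := by
    rw [HK.phi, HK.A, show (0:ℝ)*(b-a)+a = a by ring, mul_comm, mul_div_assoc,
      div_self ha0.ne', mul_one]
  -- IBP results
  set P1 : ℝ := ∫ u in (0:ℝ)..1, u^(α-1) * f (HK.phi a b u) with hP1_def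
  set P2 : ℝ := ∫ u in (0:ℝ)..1, (1-u)^(α-1) * f (HK.phi a b u) with hP2_def
  set Q1 : ℝ := ∫ u in (0:ℝ)..1, u^α * HK.Fd f' a b u with hQ1_def
  set Q2 : ℝ := ∫ u in (0:ℝ)..1, (1-u)^α * HK.Fd f' a b u with hQ2_def
  have hibp1 : α * P1 = f a - Q1 := by
    have h := HK.IBP1 hα0 hFd hi1
    rw [hphi1] at h
    rw [hP1_def, ← intervalIntegral.integral_const_mul]
    rw [← h]
    exact intervalIntegral.integral_congr fun u _ => by ring
  have hibp2 : α * P2 = f b + Q2 := by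
    have h := HK.IBP2 hα0 hFd hi2
    rw [hphi0] at h
    rw [hP2_def, ← intervalIntegral.integral_const_mul]
    rw [← h]
    exact intervalIntegral.integral_congr fun u _ => by ring
  -- substitution results
  have hJm : Jminus α (1/a) (f ∘ fun x => 1/x) (1/b)
      = (1/Real.Gamma α) * (((b-a)/(a*b))^α * P1) := by
    rw [Jminus]
    congr 1
    rw [show (f ∘ fun x => 1/x) = fun t => f (1/t) from rfl]
    exact HK.subst1 f ha0 hab α
  have hJp : Jplus α (1/b) (f ∘ fun x => 1/x) (1/a)
      = (1/Real.Gamma α) * (((b-a)/(a*b))^α * P2) := by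
    rw [Jplus]
    congr 1
    rw [show (f ∘ fun x => 1/x) = fun t => f (1/t) from rfl]
    exact HK.subst2 f ha0 hab α
  -- middle term
  have hone : (a*b/(b-a))^α * ((b-a)/(a*b))^α = 1 := by
    rw [← Real.mul_rpow (by positivity) (by positivity),
      show (a*b/(b-a)) * ((b-a)/(a*b)) = 1 by field_simp, Real.one_rpow]
  have hMid : (Real.Gamma (α+1)/2) * (a*b/(b-a))^α *
      (Jminus α (1/a) (f ∘ fun x => 1/x) (1/b) + Jplus α (1/b) (f ∘ fun x => 1/x) (1/a))
        = (α*P1 + α*P2)/2 := by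
    rw [hJm, hJp, Real.Gamma_add_one hα0.ne']
    have key : (α * Real.Gamma α/2) * (a*b/(b-a))^α *
        ((1/Real.Gamma α) * (((b-a)/(a*b))^α * P1) + (1/Real.Gamma α) * (((b-a)/(a*b))^α * P2))
          = ((a*b/(b-a))^α * ((b-a)/(a*b))^α) * ((α*P1 + α*P2)/2) := by
      field_simp
    rw [key, hone, one_mul]
  have hgoal_eq : (f a + f b) / 2 - (Real.Gamma (α + 1) / 2) * (a * b / (b - a)) ^ α *
      (Jminus α (1/a) (f ∘ fun x => 1/x) (1/b) + Jplus α (1/b) (f ∘ fun x => 1/x) (1/a))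
        = (Q1 - Q2)/2 := by
    rw [hMid]; linarith [hibp1, hibp2]
  rw [hgoal_eq]
  -- the integral E
  set E : ℝ → ℝ := fun u => ((1-u)^α - u^α) * (f' (HK.phi a b u)/(HK.A a b u)^2) with hE_def
  have hQdiff : Q1 - Q2 = (a*b*(b-a)) * ∫ u in (0:ℝ)..1, E u := by
    rw [hQ1_def, hQ2_def, ← intervalIntegral.integral_sub hi1 hi2,
      ← intervalIntegral.integral_const_mul]
    exact intervalIntegral.integral_congr fun u _ => by rw [hE_def]; simp only [HK.Fd]; ring
  have hEabs : ∀ u, |E u| = |(1-u)^α - u^α| * w u := by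
    intro u
    rw [hE_def, hw_def]
    simp only
    rw [abs_mul, abs_div, abs_of_nonneg (sq_nonneg (HK.A a b u))]
  -- estimates
  have hstep1 : |∫ u in (0:ℝ)..1, E u| ≤ ∫ u in (0:ℝ)..1, |1-2*u|^α * w u := by
    calc |∫ u in (0:ℝ)..1, E u| ≤ ∫ u in (0:ℝ)..1, |E u| :=
          intervalIntegral.abs_integral_le_integral_abs zero_le_one
      _ = ∫ u in (0:ℝ)..1, |(1-u)^α - u^α| * w u :=
          intervalIntegral.integral_congr fun u _ => hEabs u
      _ ≤ ∫ u in (0:ℝ)..1, |1-2*u|^α * w u := by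
          apply intervalIntegral.integral_mono_on zero_le_one hi5 hi4
          intro x hx
          exact mul_le_mul_of_nonneg_right (HK.abs_rpow_diff_le hα0 hα1 hx) (hw0 x)
  -- Hölder
  have hwm : AEStronglyMeasurable w (volume.restrict (Set.Ioc (0:ℝ) 1)) := by
    apply ((hmeas.abs.div hAmeas).aestronglyMeasurable).congr
    filter_upwards [ae_restrict_mem measurableSet_Ioc] with x hx
    rw [hw_def]; simp only; rw [heqIoc x hx]; rfl
  have hH := HK.holder01 (φ := fun u => |1-2*u|^α) (ψ := w) hconj
    (HK.cont_abspow hα0).aestronglyMeasurable hwm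
    (fun x _ => Real.rpow_nonneg (abs_nonneg _) _) (fun x _ => hw0 x)
    (Cφ := 1) (Cψ := Cf/a^2)
    (fun x hx => by
      rw [Real.norm_eq_abs, abs_of_nonneg (Real.rpow_nonneg (abs_nonneg _) _)]
      exact Real.rpow_le_one (abs_nonneg _) (habs12 x hx) hα0.le)
    (fun x hx => by
      rw [Real.norm_eq_abs, abs_of_nonneg (hw0 x)]
      exact hwb x (Set.Ioc_subset_Icc_self hx))
  have hpint : ∫ u in (0:ℝ)..1, ((fun u => |1-2*u|^α) u) ^ p = 1/(α*p+1) := by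
    have hc : ∀ u ∈ Set.uIcc (0:ℝ) 1, ((fun u => |1-2*u|^α) u) ^ p = |1-2*u|^(α*p) :=
      fun u _ => by simp only; rw [← Real.rpow_mul (abs_nonneg _)]
    rw [intervalIntegral.integral_congr hc, HK.int_abs_pow (by positivity : 0 < α*p)]
  rw [hpint] at hH
  -- second factor
  set V : ℝ → ℝ := fun u => (HK.A a b u)^(-(2*q)) with hV_def
  have hVc : ContinuousOn V (Set.Icc (0:ℝ) 1) := by
    intro u hu
    apply ContinuousAt.continuousWithinAt
    apply (Real.continuousAt_rpow_const _ _ (Or.inl (hApos u hu).ne')).comp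
    unfold HK.A; fun_prop
  have hwq : ∀ u ∈ Set.Icc (0:ℝ) 1, w u ^ q = |f' (HK.phi a b u)|^q * V u := by
    intro u hu
    have hA := hApos u hu
    rw [hw_def, hV_def]
    simp only
    rw [Real.div_rpow (abs_nonneg _) (sq_nonneg _),
      show ((HK.A a b u)^2 : ℝ) = (HK.A a b u)^((2:ℕ):ℝ) from (Real.rpow_natCast _ 2).symm,
      ← Real.rpow_mul hA.le, div_eq_mul_inv, ← Real.rpow_neg hA.le]
    norm_num
  set K1 : ℝ := ∫ u in (0:ℝ)..1, u * V u with hK1_def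
  set K2 : ℝ := ∫ u in (0:ℝ)..1, (1-u) * V u with hK2_def
  have hK1nn : 0 ≤ K1 := by
    apply intervalIntegral.integral_nonneg zero_le_one
    exact fun u hu => mul_nonneg hu.1 (Real.rpow_nonneg (hApos u hu).le _)
  have hK2nn : 0 ≤ K2 := by
    apply intervalIntegral.integral_nonneg zero_le_one
    exact fun u hu => mul_nonneg (by linarith [hu.2]) (Real.rpow_nonneg (hApos u hu).le _)
  set S' : ℝ := |f' a|^q * K1 + |f' b|^q * K2 with hS'_def
  have hS'nn : 0 ≤ S' := by positivity
  have hiV1 : IntervalIntegrable (fun u => |f' a|^q * (u * V u)) MeasureTheory.volume 0 1 := by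
    apply ContinuousOn.intervalIntegrable
    rw [Set.uIcc_of_le zero_le_one]
    exact (continuousOn_const.mul (continuousOn_id.mul hVc))
  have hiV2 : IntervalIntegrable (fun u => |f' b|^q * ((1-u) * V u)) MeasureTheory.volume 0 1 := by
    apply ContinuousOn.intervalIntegrable
    rw [Set.uIcc_of_le zero_le_one]
    exact (continuousOn_const.mul (((continuousOn_const.sub continuousOn_id)).mul hVc))
  have hSum : ∫ u in (0:ℝ)..1, (u * |f' a|^q + (1-u) * |f' b|^q) * V u = S' := by
    rw [hS'_def, hK1_def, hK2_def, ← intervalIntegral.integral_const_mul,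
      ← intervalIntegral.integral_const_mul, ← intervalIntegral.integral_add hiV1 hiV2]
    exact intervalIntegral.integral_congr fun u _ => by ring
  have hwqle : ∫ u in (0:ℝ)..1, w u ^ q ≤ S' := by
    rw [← hSum]
    apply intervalIntegral.integral_mono_on zero_le_one hi6 ?_ ?_
    · apply ContinuousOn.intervalIntegrable
      rw [Set.uIcc_of_le zero_le_one]
      exact ((continuousOn_id.mul continuousOn_const).add
        ((continuousOn_const.sub continuousOn_id).mul continuousOn_const)).mul hVc
    · intro x hx
      rw [hwq x hx]
      exact mul_le_mul_of_nonneg_right (hconv' x hx) (Real.rpow_nonneg (hApos x hx).le _)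
  -- F21 values
  have hF21a : F21 (2*q) 2 3 (1 - a/b) = 2 * (b^(2*q) * K2) := by
    rw [HK.F21_two ha0 hab (2*q), hK2_def]
  have hF21b : F21 (2*q) 1 3 (1 - a/b) = 2 * (b^(2*q) * K1) := by
    rw [HK.F21_one ha0 hab (2*q), hK1_def]
  have hRHSinner : (F21 (2*q) 2 3 (1-a/b) * |f' b|^q + F21 (2*q) 1 3 (1-a/b) * |f' a|^q)/2
      = b^(2*q) * S' := by
    rw [hF21a, hF21b, hS'_def]; ring
  have hb2 : (b^(2*q) * S')^(1/q) = b^2 * S'^(1/q) := by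
    rw [Real.mul_rpow (Real.rpow_nonneg hb0.le _) hS'nn, ← Real.rpow_mul hb0.le,
      show 2*q*(1/q) = 2 by field_simp,
      show (2:ℝ) = ((2:ℕ):ℝ) by norm_num, Real.rpow_natCast]
  have hwq_nn : 0 ≤ ∫ u in (0:ℝ)..1, w u ^ q :=
    intervalIntegral.integral_nonneg zero_le_one fun u _ => Real.rpow_nonneg (hw0 u) q
  have hwq_rpow : (∫ u in (0:ℝ)..1, w u ^ q)^(1/q) ≤ S'^(1/q) :=
    Real.rpow_le_rpow hwq_nn hwqle (by positivity)
  calc |(Q1 - Q2)/2| = (a*b*(b-a)/2) * |∫ u in (0:ℝ)..1, E u| := by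
        rw [hQdiff, abs_div, abs_mul,
          abs_of_nonneg (show (0:ℝ) ≤ a*b*(b-a) by positivity), abs_two]
        ring
    _ ≤ (a*b*(b-a)/2) * ((1/(α*p+1))^(1/p) * (∫ u in (0:ℝ)..1, w u ^ q)^(1/q)) := by
        apply mul_le_mul_of_nonneg_left _ (by positivity)
        exact le_trans hstep1 hH
    _ ≤ (a*b*(b-a)/2) * ((1/(α*p+1))^(1/p) * S'^(1/q)) := by
        apply mul_le_mul_of_nonneg_left _ (by positivity)
        exact mul_le_mul_of_nonneg_left hwq_rpow (Real.rpow_nonneg (by positivity) _)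
    _ = (a*(b-a)/(2*b)) * (1/(α*p+1))^(1/p) *
        ((F21 (2*q) 2 3 (1-a/b) * |f' b|^q + F21 (2*q) 1 3 (1-a/b) * |f' a|^q)/2)^(1/q) := by
        rw [hRHSinner, hb2]
        field_simp
end
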